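/- arXiv:2307.09752 — 7 statements merged into one kernel-verified Lean document; each statement's English description precedes it below -/
import Mathlib

section
/- Let n and k be integers with 2 ≤ k and 2k + 2 ≤ n (so the Kneser graph K(n,k) is not an odd graph). Then there is no subset C of the k-subsets of an n-set Ω with |C| ≥ 2 such that C is 2-neighbour-transitive with minimum distance δ ≥ 5 in K(n,k). Concretely: if δ ≥ 5 and the setwise stabiliser of C in Sym(Ω) acts transitively on C, on C₁, and on C₂, a contradiction follows. -/
open Finset

abbrev KVert (Ω : Type*) [DecidableEq Ω] (k : ℕ) := {s : Finset Ω // s.card = k}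

def kneser (Ω : Type*) [DecidableEq Ω] (k : ℕ) : SimpleGraph (KVert Ω k) where
  Adj a b := a ≠ b ∧ Disjoint a.1 b.1
  symm := ⟨fun a b h => ⟨h.1.symm, h.2.symm⟩⟩
  loopless := ⟨fun a h => h.1 rfl⟩

/-- The action of a permutation of `Ω` on the vertices of the Kneser graph. -/
def permV {Ω : Type*} [DecidableEq Ω] {k : ℕ} (g : Equiv.Perm Ω) (a : KVert Ω k) : KVert Ω k :=
  ⟨a.1.map g.toEmbedding, by simp [a.2]⟩

/-- The setwise stabiliser of a code `C` inside `Sym(Ω)`. -/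
def autC {Ω : Type*} [DecidableEq Ω] {k : ℕ} (C : Set (KVert Ω k)) : Set (Equiv.Perm Ω) :=
  {g | (permV g) '' C = C}

/-- `nbrs C i` is `Cᵢ`, the set of vertices at distance exactly `i` from the code `C`. -/
def nbrs {Ω : Type*} [Fintype Ω] [DecidableEq Ω] {k : ℕ} (C : Set (KVert Ω k)) (i : ℕ) :
    Set (KVert Ω k) :=
  {γ | (∃ α ∈ C, (kneser Ω k).dist α γ = i) ∧ ∀ β ∈ C, i ≤ (kneser Ω k).dist β γ}

/-- `G` acts transitively on the set of vertices `S`. -/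
def transOn {Ω : Type*} [DecidableEq Ω] {k : ℕ} (G : Set (Equiv.Perm Ω))
    (S : Set (KVert Ω k)) : Prop :=
  ∀ x ∈ S, ∀ y ∈ S, ∃ g ∈ G, permV g x = y

section helpers

variable {Ω : Type*} [Fintype Ω] [DecidableEq Ω] {k : ℕ}

lemma exists_disjoint_kset (s : Finset Ω) (h : s.card + k ≤ Fintype.card Ω) :
    ∃ t : Finset Ω, t.card = k ∧ Disjoint t s := by
  have h2 : k ≤ (univ \ s).card := by
    rw [card_sdiff_of_subset (subset_univ s), card_univ]; omega
  obtain ⟨t, hts, htc⟩ := Finset.exists_subset_card_eq h2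
  exact ⟨t, htc, Finset.sdiff_disjoint.mono_left hts⟩

lemma kdist_le_two (hk : 1 ≤ k) (α β : KVert Ω k)
    (h : (α.1 ∪ β.1).card + k ≤ Fintype.card Ω) :
    (kneser Ω k).dist α β ≤ 2 ∧ (kneser Ω k).Reachable α β := by
  obtain ⟨t, htc, htd⟩ := exists_disjoint_kset (α.1 ∪ β.1) h
  set c : KVert Ω k := ⟨t, htc⟩ with hc
  have hdα : Disjoint t α.1 := htd.mono_right subset_union_left
  have hdβ : Disjoint t β.1 := htd.mono_right subset_union_right
  have hne : ∀ x : KVert Ω k, Disjoint t x.1 → c ≠ x := by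
    intro x hd he
    have : t = x.1 := congrArg Subtype.val he
    rw [this] at hd
    have hx : x.1 = ∅ := by simpa using disjoint_self.mp hd
    have := x.2
    rw [hx] at this
    simp at this; omega
  have h1 : (kneser Ω k).Adj α c := ⟨(hne α hdα).symm, hdα.symm⟩
  have h2 : (kneser Ω k).Adj c β := ⟨hne β hdβ, hdβ⟩
  refine ⟨?_, ⟨SimpleGraph.Walk.cons h1 (SimpleGraph.Walk.cons h2 SimpleGraph.Walk.nil)⟩⟩
  calc (kneser Ω k).dist α β
      ≤ (SimpleGraph.Walk.cons h1 (SimpleGraph.Walk.cons h2 SimpleGraph.Walk.nil)).length :=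
        SimpleGraph.dist_le _
    _ = 2 := by simp

lemma kdist_eq_two (hk : 1 ≤ k) (α β : KVert Ω k) (hne : α ≠ β)
    (hnd : ¬ Disjoint α.1 β.1) (h : (α.1 ∪ β.1).card + k ≤ Fintype.card Ω) :
    (kneser Ω k).dist α β = 2 := by
  obtain ⟨hle, hr⟩ := kdist_le_two hk α β h
  have h0 : (kneser Ω k).dist α β ≠ 0 := fun h0 => hne (hr.dist_eq_zero_iff.mp h0)
  have h1 : (kneser Ω k).dist α β ≠ 1 := by
    intro h1
    exact hnd (SimpleGraph.dist_eq_one_iff_adj.mp h1).2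
  omega

lemma kreach (hk : 1 ≤ k) (hn : 2 * k + 1 ≤ Fintype.card Ω) :
    ∀ α β : KVert Ω k, (kneser Ω k).Reachable α β := by
  intro α
  suffices H : ∀ m : ℕ, ∀ β : KVert Ω k, (β.1 \ α.1).card ≤ m →
      (kneser Ω k).Reachable α β by
    intro β; exact H (β.1 \ α.1).card β le_rfl
  intro m
  induction m with
  | zero =>
    intro β hb
    have : β.1 \ α.1 = ∅ := card_eq_zero.mp (Nat.le_zero.mp hb)
    have hsub : β.1 ⊆ α.1 := sdiff_eq_empty_iff_subset.mp this
    have : β.1 = α.1 := Finset.eq_of_subset_of_card_le hsub (by rw [α.2, β.2])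
    have : β = α := Subtype.ext this
    rw [this]
  | succ m ih =>
    intro β hb
    by_cases hz : (β.1 \ α.1).card = 0
    · exact ih β (by omega)
    · obtain ⟨b, hbmem⟩ := Finset.card_pos.mp (Nat.pos_of_ne_zero hz)
      have hcs : (α.1 \ β.1).card = (β.1 \ α.1).card :=
        Finset.card_sdiff_comm (by rw [α.2, β.2])
      obtain ⟨a, hamem⟩ := Finset.card_pos.mp (by rw [hcs]; exact Nat.pos_of_ne_zero hz)
      obtain ⟨hbβ, hbα⟩ := Finset.mem_sdiff.mp hbmem
      obtain ⟨haα, haβ⟩ := Finset.mem_sdiff.mp hamem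
      have hanotin : a ∉ β.1.erase b := fun h => haβ (Finset.mem_of_mem_erase h)
      have hβ' : (insert a (β.1.erase b)).card = k := by
        rw [Finset.card_insert_of_notMem hanotin, Finset.card_erase_of_mem hbβ, β.2]
        omega
      set β' : KVert Ω k := ⟨insert a (β.1.erase b), hβ'⟩ with hβ'def
      have hsub : β'.1 ∪ β.1 ⊆ insert a β.1 := by
        intro z hz
        rcases Finset.mem_union.mp hz with h | h
        · rcases Finset.mem_insert.mp h with h | h
          · exact Finset.mem_insert.mpr (Or.inl h)
          · exact Finset.mem_insert.mpr (Or.inr (Finset.mem_of_mem_erase h))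
        · exact Finset.mem_insert.mpr (Or.inr h)
      have hcard : (β'.1 ∪ β.1).card + k ≤ Fintype.card Ω := by
        have := Finset.card_le_card hsub
        have h2 : (insert a β.1).card ≤ k + 1 := by
          rw [Finset.card_insert_of_notMem haβ, β.2]
        omega
      have hr1 : (kneser Ω k).Reachable β' β := (kdist_le_two hk β' β hcard).2
      have hsub2 : β'.1 \ α.1 ⊆ (β.1 \ α.1).erase b := by
        intro z hzm
        obtain ⟨hz1, hz2⟩ := Finset.mem_sdiff.mp hzm
        rcases Finset.mem_insert.mp hz1 with h | h
        · exact absurd (h ▸ haα) hz2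
        · exact Finset.mem_erase.mpr ⟨(Finset.mem_erase.mp h).1,
            Finset.mem_sdiff.mpr ⟨Finset.mem_of_mem_erase h, hz2⟩⟩
      have hle : (β'.1 \ α.1).card ≤ m := by
        have := Finset.card_le_card hsub2
        have h2 : ((β.1 \ α.1).erase b).card = (β.1 \ α.1).card - 1 :=
          Finset.card_erase_of_mem hbmem
        omega
      exact (ih β' hle).trans hr1

lemma kconn (hk : 1 ≤ k) (hn : 2 * k + 1 ≤ Fintype.card Ω) :
    (kneser Ω k).Connected := by
  obtain ⟨t, _, htc⟩ := Finset.exists_subset_card_eq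
    (show k ≤ (univ : Finset Ω).card by rw [card_univ]; omega)
  haveI : Nonempty (KVert Ω k) := ⟨⟨t, htc⟩⟩
  exact ⟨kreach hk hn⟩

lemma permV_inv (g : Equiv.Perm Ω) (a : KVert Ω k) : permV g⁻¹ (permV g a) = a := by
  apply Subtype.ext
  simp only [permV]
  ext z
  simp [Finset.mem_map_equiv, Equiv.Perm.inv_def]

lemma permV_adj (g : Equiv.Perm Ω) (a b : KVert Ω k) :
    (kneser Ω k).Adj (permV g a) (permV g b) ↔ (kneser Ω k).Adj a b := by
  constructor
  · rintro ⟨h1, h2⟩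
    refine ⟨fun he => h1 (he ▸ rfl), ?_⟩
    have := (Finset.disjoint_map g.toEmbedding).mp h2
    exact this
  · rintro ⟨h1, h2⟩
    refine ⟨fun he => h1 ?_, (Finset.disjoint_map g.toEmbedding).mpr h2⟩
    have := congrArg (permV g⁻¹) he
    rwa [permV_inv, permV_inv] at this

def kIso (g : Equiv.Perm Ω) : kneser Ω k ≃g kneser Ω k where
  toFun := permV g
  invFun := permV g⁻¹
  left_inv := permV_inv g
  right_inv := fun a => by have := permV_inv g⁻¹ a; rwa [inv_inv] at this
  map_rel_iff' := permV_adj g _ _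

lemma permV_dist (hk : 1 ≤ k) (hn : 2 * k + 1 ≤ Fintype.card Ω) (g : Equiv.Perm Ω)
    (a b : KVert Ω k) :
    (kneser Ω k).dist (permV g a) (permV g b) = (kneser Ω k).dist a b := by
  have key : ∀ (h : Equiv.Perm Ω) (x y : KVert Ω k),
      (kneser Ω k).dist (permV h x) (permV h y) ≤ (kneser Ω k).dist x y := by
    intro h x y
    obtain ⟨p, hp⟩ := (kreach hk hn x y).exists_walk_length_eq_dist
    calc (kneser Ω k).dist (permV h x) (permV h y)
        ≤ (p.map (kIso h).toHom).length := SimpleGraph.dist_le _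
      _ = p.length := p.length_map _
      _ = (kneser Ω k).dist x y := hp
  refine le_antisymm (key g a b) ?_
  have := key g⁻¹ (permV g a) (permV g b)
  rwa [permV_inv, permV_inv] at this

lemma permV_inter_card (g : Equiv.Perm Ω) (a b : KVert Ω k) :
    ((permV g a).1 ∩ (permV g b).1).card = (a.1 ∩ b.1).card := by
  show ((a.1.map g.toEmbedding) ∩ (b.1.map g.toEmbedding)).card = _
  rw [← Finset.map_inter, Finset.card_map]

end helpers

/-- no 2-neighbour-transitive code with minimum distance at least 5 exists
in a Kneser graph `K(n,k)` that is not an odd graph (i.e. with `n ≥ 2k+2`). -/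
theorem stmt0 {Ω : Type*} [Fintype Ω] [DecidableEq Ω] {n k : ℕ}
    (hcard : Fintype.card Ω = n) (hk : 2 ≤ k) (hn : 2 * k + 2 ≤ n)
    (C : Set (KVert Ω k)) (hC : C.Nontrivial)
    (hdelta : ∀ α ∈ C, ∀ β ∈ C, α ≠ β → 5 ≤ (kneser Ω k).dist α β)
    (h0 : transOn (autC C) C)
    (h1 : transOn (autC C) (nbrs C 1))
    (h2 : transOn (autC C) (nbrs C 2)) : False := by
  subst hcard
  have hk1 : 1 ≤ k := by omega
  have hn1 : 2 * k + 1 ≤ Fintype.card Ω := by omega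
  have hconn := kconn hk1 hn1
  by_cases hk3 : 3 ≤ k
  · -- k ≥ 3
    obtain ⟨α, hα, -⟩ := hC
    -- pick two distinct elements of α and two distinct elements outside α
    obtain ⟨a, ha, b, hb, hab⟩ := Finset.one_lt_card.mp (show 1 < α.1.card by rw [α.2]; omega)
    have houtc : 1 < ((univ : Finset Ω) \ α.1).card := by
      rw [card_sdiff_of_subset (subset_univ _), card_univ, α.2]; omega
    obtain ⟨x, hx, y, hy, hxy⟩ := Finset.one_lt_card.mp houtc
    have hxα : x ∉ α.1 := (Finset.mem_sdiff.mp hx).2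
    have hyα : y ∉ α.1 := (Finset.mem_sdiff.mp hy).2
    -- the vertex β at distance 2 with |α ∩ β| = k - 1
    have hβc : (insert x (α.1.erase a)).card = k := by
      rw [Finset.card_insert_of_notMem (fun h => hxα (Finset.mem_of_mem_erase h)),
        Finset.card_erase_of_mem ha, α.2]; omega
    set βv : KVert Ω k := ⟨insert x (α.1.erase a), hβc⟩ with hβdef
    -- the vertex γ at distance 2 with |α ∩ γ| = k - 2
    have hbe : b ∈ α.1.erase a := Finset.mem_erase.mpr ⟨hab.symm, hb⟩
    have hyee : y ∉ (α.1.erase a).erase b := fun h => hyα (Finset.mem_of_mem_erase (Finset.mem_of_mem_erase h))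
    have hxie : x ∉ insert y ((α.1.erase a).erase b) := by
      intro h
      rcases Finset.mem_insert.mp h with h | h
      · exact hxy h
      · exact hxα (Finset.mem_of_mem_erase (Finset.mem_of_mem_erase h))
    have hγc : (insert x (insert y ((α.1.erase a).erase b))).card = k := by
      rw [Finset.card_insert_of_notMem hxie, Finset.card_insert_of_notMem hyee,
        Finset.card_erase_of_mem hbe, Finset.card_erase_of_mem ha, α.2]; omega
    set γv : KVert Ω k := ⟨insert x (insert y ((α.1.erase a).erase b)), hγc⟩ with hγdef
    -- intersections
    have hcapβ : α.1 ∩ βv.1 = α.1.erase a := by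
      ext z
      simp only [hβdef, Finset.mem_inter, Finset.mem_insert, Finset.mem_erase]
      constructor
      · rintro ⟨hzα, rfl | ⟨hza, -⟩⟩
        · exact absurd hzα hxα
        · exact ⟨hza, hzα⟩
      · rintro ⟨hza, hzα⟩
        exact ⟨hzα, Or.inr ⟨hza, hzα⟩⟩
    have hcapγ : α.1 ∩ γv.1 = (α.1.erase a).erase b := by
      ext z
      simp only [hγdef, Finset.mem_inter, Finset.mem_insert, Finset.mem_erase]
      constructor
      · rintro ⟨hzα, rfl | h⟩
        · exact absurd hzα hxα
        · rcases h with rfl | h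
          · exact absurd hzα hyα
          · exact h
      · rintro ⟨hzb, hza, hzα⟩
        exact ⟨hzα, Or.inr (Or.inr ⟨hzb, hza, hzα⟩)⟩
    have hcapβcard : (α.1 ∩ βv.1).card = k - 1 := by
      rw [hcapβ, Finset.card_erase_of_mem ha, α.2]
    have hcapγcard : (α.1 ∩ γv.1).card = k - 2 := by
      rw [hcapγ, Finset.card_erase_of_mem hbe, Finset.card_erase_of_mem ha, α.2]; omega
    -- distances
    have hneβ : α ≠ βv := by
      intro h
      have : x ∈ α.1 := by rw [h]; exact Finset.mem_insert_self _ _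
      exact hxα this
    have hneγ : α ≠ γv := by
      intro h
      have : x ∈ α.1 := by rw [h]; exact Finset.mem_insert_self _ _
      exact hxα this
    have hndβ : ¬ Disjoint α.1 βv.1 := by
      rw [Finset.not_disjoint_iff]
      exact ⟨b, hb, Finset.mem_insert_of_mem hbe⟩
    have hndγ : ¬ Disjoint α.1 γv.1 := by
      rw [Finset.not_disjoint_iff]
      obtain ⟨c, hc⟩ := Finset.card_pos.mp
        (show 0 < ((α.1.erase a).erase b).card by
          rw [Finset.card_erase_of_mem hbe, Finset.card_erase_of_mem ha, α.2]; omega)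
      exact ⟨c, Finset.mem_of_mem_erase (Finset.mem_of_mem_erase hc),
        Finset.mem_insert_of_mem (Finset.mem_insert_of_mem hc)⟩
    have huβ : (α.1 ∪ βv.1).card + k ≤ Fintype.card Ω := by
      have hsub : α.1 ∪ βv.1 ⊆ insert x α.1 := by
        intro z hz
        rcases Finset.mem_union.mp hz with h | h
        · exact Finset.mem_insert_of_mem h
        · rcases Finset.mem_insert.mp h with rfl | h
          · exact Finset.mem_insert_self _ _
          · exact Finset.mem_insert_of_mem (Finset.mem_of_mem_erase h)
      have h1 := Finset.card_le_card hsub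
      have h2 : (insert x α.1).card ≤ k + 1 := by
        rw [Finset.card_insert_of_notMem hxα, α.2]
      omega
    have huγ : (α.1 ∪ γv.1).card + k ≤ Fintype.card Ω := by
      have hsub : α.1 ∪ γv.1 ⊆ insert x (insert y α.1) := by
        intro z hz
        rcases Finset.mem_union.mp hz with h | h
        · exact Finset.mem_insert_of_mem (Finset.mem_insert_of_mem h)
        · rcases Finset.mem_insert.mp h with rfl | h
          · exact Finset.mem_insert_self _ _
          · rcases Finset.mem_insert.mp h with rfl | h
            · exact Finset.mem_insert_of_mem (Finset.mem_insert_self _ _)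
            · exact Finset.mem_insert_of_mem (Finset.mem_insert_of_mem
                (Finset.mem_of_mem_erase (Finset.mem_of_mem_erase h)))
      have h1 := Finset.card_le_card hsub
      have h2 : (insert x (insert y α.1)).card ≤ k + 2 := by
        have : (insert y α.1).card ≤ k + 1 := by
          rw [Finset.card_insert_of_notMem hyα, α.2]
        calc (insert x (insert y α.1)).card ≤ (insert y α.1).card + 1 :=
              Finset.card_insert_le _ _
          _ ≤ k + 2 := by omega
      omega
    have hdβ : (kneser Ω k).dist α βv = 2 := kdist_eq_two hk1 α βv hneβ hndβ huβ
    have hdγ : (kneser Ω k).dist α γv = 2 := kdist_eq_two hk1 α γv hneγ hndγ huγ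
    -- membership in C₂
    have two_mem : ∀ δv : KVert Ω k, (kneser Ω k).dist α δv = 2 → δv ∈ nbrs C 2 := by
      intro δv hd
      refine ⟨⟨α, hα, hd⟩, ?_⟩
      intro β' hβ'
      by_cases hbe' : β' = α
      · rw [hbe', hd]
      · have h5 := hdelta α hα β' hβ' (fun he => hbe' he.symm)
        have htri := hconn.dist_triangle (u := α) (v := δv) (w := β')
        rw [SimpleGraph.dist_comm (u := β')]
        omega
    obtain ⟨g, hg, hgβ⟩ := h2 βv (two_mem βv hdβ) γv (two_mem γv hdγ)
    have hαg : permV g α ∈ C := by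
      have : permV g α ∈ permV g '' C := ⟨α, hα, rfl⟩
      rwa [hg] at this
    have hdist : (kneser Ω k).dist (permV g α) γv = 2 := by
      rw [← hgβ, permV_dist hk1 hn1, hdβ]
    have hfix : permV g α = α := by
      by_contra hne'
      have h5 := hdelta α hα (permV g α) hαg (fun he => hne' he.symm)
      have htri := hconn.dist_triangle (u := α) (v := γv) (w := permV g α)
      have := SimpleGraph.dist_comm (G := kneser Ω k) (u := permV g α) (v := γv)
      omega
    have hcard := permV_inter_card g α βv
    rw [hfix, hgβ, hcapγcard, hcapβcard] at hcard
    omega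
  · -- k = 2 : any two distinct vertices are at distance ≤ 2
    obtain ⟨α, hα, β, hβ, hne⟩ := hC
    have h5 := hdelta α hα β hβ hne
    by_cases hd : Disjoint α.1 β.1
    · have : (kneser Ω k).dist α β = 1 :=
        SimpleGraph.dist_eq_one_iff_adj.mpr ⟨hne, hd⟩
      omega
    · have hu : (α.1 ∪ β.1).card + k ≤ Fintype.card Ω := by
        have h1 := Finset.card_union_add_card_inter α.1 β.1
        have h2 : 0 < (α.1 ∩ β.1).card := Finset.card_pos.mpr
          (Finset.not_disjoint_iff_nonempty_inter.mp hd)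
        have h3 := α.2; have h4 := β.2
        omega
      have := (kdist_le_two hk1 α β hu).1
      omega
end

section
/- Let C be a 2-neighbour-transitive code in the odd graph O_{k+1} = K(2k+1,k) with minimum distance δ ≥ 5 (in the odd-graph metric). Then, viewing C as a code in the Johnson graph J(2k+1,k) on the same vertex set, C has minimum distance at least 3 in J(2k+1,k), and the set C₂ of 2-neighbours of C in the odd graph equals the set C′₁ of 1-neighbours of C in the Johnson graph; consequently C is neighbour-transitive in J(2k+1,k). -/
open Finset

/-- The Johnson graph `J(n,k)` on the `k`-subsets of `Ω`. -/
def johnson (Ω : Type*) [DecidableEq Ω] (k : ℕ) : SimpleGraph (KVert Ω k) where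
  Adj a b := a ≠ b ∧ (a.1 ∩ b.1).card = k - 1
  symm := ⟨fun a b h => ⟨h.1.symm, by rw [Finset.inter_comm]; exact h.2⟩⟩
  loopless := ⟨fun a h => h.1 rfl⟩

/-- `Cᵢ` with respect to the Johnson metric. -/
def nbrsJ {Ω : Type*} [Fintype Ω] [DecidableEq Ω] {k : ℕ} (C : Set (KVert Ω k)) (i : ℕ) :
    Set (KVert Ω k) :=
  {γ | (∃ α ∈ C, (johnson Ω k).dist α γ = i) ∧ ∀ β ∈ C, i ≤ (johnson Ω k).dist β γ}

/-- Auxiliary: the Johnson graph is connected (any two vertices are reachable). -/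
lemma johnson_reachable {Ω : Type*} [Fintype Ω] [DecidableEq Ω] {k : ℕ}
    (α β : KVert Ω k) : (johnson Ω k).Reachable α β := by
  have key : ∀ n (α β : KVert Ω k), (α.1 \ β.1).card = n → (johnson Ω k).Reachable α β := by
    intro n
    induction n with
    | zero =>
      intro α β h
      have hsub : α.1 ⊆ β.1 := by
        rwa [Finset.card_eq_zero, Finset.sdiff_eq_empty_iff_subset] at h
      have : α = β := Subtype.ext (Finset.eq_of_subset_of_card_le hsub (by rw [α.2, β.2]))
      exact this ▸ SimpleGraph.Reachable.refl α
    | succ n ih =>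
      intro α β h
      obtain ⟨a, ha⟩ : (α.1 \ β.1).Nonempty := by
        rw [← Finset.card_pos, h]; omega
      obtain ⟨b, hb⟩ : (β.1 \ α.1).Nonempty := by
        rw [← Finset.card_pos, ← Finset.card_sdiff_comm (by rw [α.2, β.2]), h]; omega
      rw [Finset.mem_sdiff] at ha hb
      have hk1 : 0 < k := α.2 ▸ Finset.card_pos.mpr ⟨a, ha.1⟩
      have hbna : b ∉ α.1 := hb.2
      have hμcard : (insert b (α.1.erase a)).card = k := by
        rw [Finset.card_insert_of_notMem (fun hmem => hbna (Finset.mem_of_mem_erase hmem)),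
          Finset.card_erase_of_mem ha.1, α.2]
        omega
      set μ : KVert Ω k := ⟨insert b (α.1.erase a), hμcard⟩ with hμ
      have hinter : α.1 ∩ μ.1 = α.1.erase a := by
        rw [hμ]
        show α.1 ∩ insert b (α.1.erase a) = α.1.erase a
        rw [Finset.inter_insert_of_notMem hbna,
          Finset.inter_eq_right.mpr (Finset.erase_subset _ _)]
      have hadj : (johnson Ω k).Adj α μ := by
        refine ⟨fun hEq => hbna ?_, ?_⟩
        · rw [hEq]; exact Finset.mem_insert_self b _
        · show (α.1 ∩ μ.1).card = k - 1
          rw [hinter, Finset.card_erase_of_mem ha.1, α.2]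
      have hsd : (μ.1 \ β.1).card = n := by
        rw [hμ]
        show ((insert b (α.1.erase a)) \ β.1).card = n
        rw [Finset.insert_sdiff_of_mem _ hb.1, Finset.erase_sdiff_comm,
          Finset.card_erase_of_mem (Finset.mem_sdiff.mpr ha), h]
        omega
      exact hadj.reachable.trans (ih μ β hsd)
  exact key _ α β rfl

/-- Auxiliary: if two `k`-sets meet in `k-1` points, their Kneser distance is 2. -/
lemma kneser_dist_two {Ω : Type*} [Fintype Ω] [DecidableEq Ω] {k : ℕ}
    (hk : 2 ≤ k) (hcard : Fintype.card Ω = 2 * k + 1)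
    (α γ : KVert Ω k) (h : (α.1 ∩ γ.1).card = k - 1) :
    (kneser Ω k).dist α γ = 2 := by
  have hne : α ≠ γ := by
    intro hEq
    rw [hEq, Finset.inter_self, γ.2] at h
    omega
  have hunion : (α.1 ∪ γ.1).card = k + 1 := by
    have := Finset.card_union_add_card_inter α.1 γ.1
    rw [α.2, γ.2, h] at this
    omega
  have hδcard : ((α.1 ∪ γ.1)ᶜ).card = k := by
    rw [Finset.card_compl, hunion, hcard]
    omega
  set δ : KVert Ω k := ⟨(α.1 ∪ γ.1)ᶜ, hδcard⟩ with hδ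
  have hdisj1 : Disjoint α.1 δ.1 :=
    (disjoint_compl_right.mono_left Finset.subset_union_left)
  have hdisj2 : Disjoint δ.1 γ.1 :=
    (disjoint_compl_right.mono_left Finset.subset_union_right).symm
  have hnontriv : ∀ x y : KVert Ω k, Disjoint x.1 y.1 → x ≠ y := by
    intro x y hd hEq
    rw [hEq, Finset.disjoint_self_iff_empty] at hd
    have := y.2
    rw [hd] at this
    simp at this
    omega
  have hadj1 : (kneser Ω k).Adj α δ := ⟨hnontriv α δ hdisj1, hdisj1⟩
  have hadj2 : (kneser Ω k).Adj δ γ := ⟨hnontriv δ γ hdisj2, hdisj2⟩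
  have hle : (kneser Ω k).dist α γ ≤ 2 := by
    simpa using SimpleGraph.dist_le
      (SimpleGraph.Walk.cons hadj1 (SimpleGraph.Walk.cons hadj2 SimpleGraph.Walk.nil))
  have hne0 : (kneser Ω k).dist α γ ≠ 0 :=
    SimpleGraph.dist_ne_zero_iff_ne_and_reachable.mpr ⟨hne, hadj1.reachable.trans hadj2.reachable⟩
  have hne1 : (kneser Ω k).dist α γ ≠ 1 := by
    rw [ne_eq, SimpleGraph.dist_eq_one_iff_adj]
    intro hadj
    have : (α.1 ∩ γ.1).card = 0 := by
      rw [Finset.disjoint_iff_inter_eq_empty.mp hadj.2]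
      simp
    omega
  omega

/-- Auxiliary: if the Kneser distance between two `k`-sets is 2, they meet in `k-1` points. -/
lemma inter_of_kneser_dist_two {Ω : Type*} [Fintype Ω] [DecidableEq Ω] {k : ℕ}
    (hcard : Fintype.card Ω = 2 * k + 1)
    (α γ : KVert Ω k) (h : (kneser Ω k).dist α γ = 2) :
    (α.1 ∩ γ.1).card = k - 1 := by
  have hne : α ≠ γ := by
    intro hEq
    rw [hEq, SimpleGraph.dist_self] at h
    omega
  obtain ⟨p, hp⟩ := SimpleGraph.exists_walk_of_dist_ne_zero (by rw [h]; norm_num :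
    (kneser Ω k).dist α γ ≠ 0)
  rw [h] at hp
  cases p with
  | nil => simp at hp
  | cons hadj q =>
    cases q with
    | nil => simp at hp
    | cons hadj2 q2 =>
      cases q2 with
      | cons hadj3 q3 => simp [SimpleGraph.Walk.length_cons] at hp
      | nil =>
        -- middle vertex δ with α, γ both disjoint from δ
        rename_i δ
        have hd1 : Disjoint α.1 δ.1 := hadj.2
        have hd2 : Disjoint δ.1 γ.1 := hadj2.2
        have hsub : α.1 ∪ γ.1 ⊆ δ.1ᶜ := by
          rw [Finset.union_subset_iff]
          constructor
          · exact le_compl_iff_disjoint_right.mpr hd1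
          · exact le_compl_iff_disjoint_right.mpr hd2.symm
        have hcompl : (δ.1ᶜ).card = k + 1 := by
          rw [Finset.card_compl, δ.2, hcard]; omega
        have hub : (α.1 ∪ γ.1).card ≤ k + 1 := hcompl ▸ Finset.card_le_card hsub
        have hsum := Finset.card_union_add_card_inter α.1 γ.1
        rw [α.2, γ.2] at hsum
        have hneqk : (α.1 ∩ γ.1).card ≠ k := by
          intro hEq
          have : α.1 ∩ γ.1 = α.1 :=
            Finset.eq_of_subset_of_card_le Finset.inter_subset_left (by rw [hEq, α.2])
          have hsubαγ : α.1 ⊆ γ.1 := by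
            rw [← this]; exact Finset.inter_subset_right
          exact hne (Subtype.ext (Finset.eq_of_subset_of_card_le hsubαγ (by rw [α.2, γ.2])))
        have hle : (α.1 ∩ γ.1).card ≤ k := by
          have := Finset.card_le_card (Finset.inter_subset_left (s₁ := α.1) (s₂ := γ.1))
          rw [α.2] at this
          exact this
        omega

/-- Auxiliary: triangle inequality for graph distance given both legs are realised by walks. -/
lemma dist_tri {V : Type*} (G : SimpleGraph V) {u v w : V}
    (h1 : G.dist u v ≠ 0) (h2 : G.dist v w ≠ 0) :
    G.dist u w ≤ G.dist u v + G.dist v w := by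
  obtain ⟨p, hp⟩ := SimpleGraph.exists_walk_of_dist_ne_zero h1
  obtain ⟨q, hq⟩ := SimpleGraph.exists_walk_of_dist_ne_zero h2
  rw [← hp, ← hq, ← SimpleGraph.Walk.length_append]
  exact SimpleGraph.dist_le _

/-- a 2-neighbour-transitive code in the odd graph with odd-graph minimum
distance at least 5 is a neighbour-transitive code of minimum distance at least 3 in the
Johnson graph on the same vertex set, with `C₂` (odd graph) equal to `C₁` (Johnson). -/
theorem stmt2 {Ω : Type*} [Fintype Ω] [DecidableEq Ω] {k : ℕ}
    (hk : 2 ≤ k) (hcard : Fintype.card Ω = 2 * k + 1)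
    (C : Set (KVert Ω k)) (hC : C.Nontrivial)
    (hdelta : ∀ α ∈ C, ∀ β ∈ C, α ≠ β → 5 ≤ (kneser Ω k).dist α β)
    (h0 : transOn (autC C) C)
    (h1 : transOn (autC C) (nbrs C 1))
    (h2 : transOn (autC C) (nbrs C 2)) :
    (∀ α ∈ C, ∀ β ∈ C, α ≠ β → 3 ≤ (johnson Ω k).dist α β) ∧
    nbrs C 2 = nbrsJ C 1 ∧
    transOn (autC C) (nbrsJ C 1) := by
  -- Part 1: minimum Johnson distance at least 3
  have part1 : ∀ α ∈ C, ∀ β ∈ C, α ≠ β → 3 ≤ (johnson Ω k).dist α β := by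
    intro α hα β hβ hne
    have h5 := hdelta α hα β hβ hne
    have hne0 : (johnson Ω k).dist α β ≠ 0 :=
      SimpleGraph.dist_ne_zero_iff_ne_and_reachable.mpr ⟨hne, johnson_reachable α β⟩
    have hne1 : (johnson Ω k).dist α β ≠ 1 := by
      rw [ne_eq, SimpleGraph.dist_eq_one_iff_adj]
      intro hadj
      have := kneser_dist_two hk hcard α β hadj.2
      omega
    have hne2 : (johnson Ω k).dist α β ≠ 2 := by
      intro h2d
      obtain ⟨p, hp⟩ := SimpleGraph.exists_walk_of_dist_ne_zero hne0
      rw [h2d] at hp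
      cases p with
      | nil => simp at hp
      | cons hadj q =>
        cases q with
        | nil => simp at hp
        | cons hadj2 q2 =>
          cases q2 with
          | cons hadj3 q3 => simp [SimpleGraph.Walk.length_cons] at hp
          | nil =>
            rename_i μ
            have hd1 : (kneser Ω k).dist α μ = 2 := kneser_dist_two hk hcard α μ hadj.2
            have hd2 : (kneser Ω k).dist μ β = 2 := kneser_dist_two hk hcard μ β hadj2.2
            have := dist_tri (kneser Ω k) (u := α) (v := μ) (w := β)
              (by omega) (by omega)
            omega
    omega
  -- Part 2: nbrs C 2 = nbrsJ C 1
  have part2 : nbrs C 2 = nbrsJ C 1 := by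
    ext γ
    constructor
    · rintro ⟨⟨α, hα, hd⟩, hall⟩
      have hint : (α.1 ∩ γ.1).card = k - 1 := inter_of_kneser_dist_two hcard α γ hd
      have hneαγ : α ≠ γ := by
        intro hEq
        rw [hEq, SimpleGraph.dist_self] at hd
        omega
      refine ⟨⟨α, hα, SimpleGraph.dist_eq_one_iff_adj.mpr ⟨hneαγ, hint⟩⟩, ?_⟩
      intro β hβ
      have h2le := hall β hβ
      have hneβγ : β ≠ γ := by
        intro hEq
        rw [hEq, SimpleGraph.dist_self] at h2le
        omega
      exact (johnson_reachable β γ).pos_dist_of_ne hneβγ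
    · rintro ⟨⟨α, hα, hd⟩, hall⟩
      have hadj := SimpleGraph.dist_eq_one_iff_adj.mp hd
      have hdαγ : (kneser Ω k).dist α γ = 2 := kneser_dist_two hk hcard α γ hadj.2
      refine ⟨⟨α, hα, hdαγ⟩, ?_⟩
      intro β hβ
      have h1le := hall β hβ
      have hneβγ : β ≠ γ := by
        intro hEq
        rw [hEq, SimpleGraph.dist_self] at h1le
        omega
      by_cases hβα : β = α
      · rw [hβα, hdαγ]
      · have h5 := hdelta β hβ α hα hβα
        have hreachβα : (kneser Ω k).Reachable β α :=
          SimpleGraph.Reachable.of_dist_ne_zero (by omega)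
        have hreachαγ : (kneser Ω k).Reachable α γ :=
          SimpleGraph.Reachable.of_dist_ne_zero (by omega)
        have hne0 : (kneser Ω k).dist β γ ≠ 0 :=
          SimpleGraph.dist_ne_zero_iff_ne_and_reachable.mpr ⟨hneβγ, hreachβα.trans hreachαγ⟩
        have hne1 : (kneser Ω k).dist β γ ≠ 1 := by
          intro h1
          have hγα : (kneser Ω k).dist γ α = 2 := by
            rw [SimpleGraph.dist_comm]; exact hdαγ
          have := dist_tri (kneser Ω k) (u := β) (v := γ) (w := α)
            (by omega) (by omega)
          omega
        omega
  refine ⟨part1, part2, ?_⟩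
  rw [← part2]
  exact h2
end

section
/- Let Ω be the disjoint union of nonempty sets U and V with |U| = u, |V| = v, let a + b = k with 0 ≤ a ≤ u, 0 ≤ b ≤ v, and let C = C_int(u,v;a,b) be the set of all k-subsets α of Ω with |α ∩ U| = a and |α ∩ V| = b. Suppose n = u + v, 2 ≤ k ≤ (n−1)/2, and one of: (1) u = 1 and a = 0; (2) n = 2k+1, u = 2a, v = 2b+1; (3) u = a. Then G = Sym(U) × Sym(V) ≤ Aut(C) and G acts transitively on C and on C₁ (the set of 1-neighbours of C in the Kneser graph K(n,k)); i.e. C is G-neighbour-transitive. -/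
open Finset

section Aux

variable {Ω : Type*} [DecidableEq Ω]

lemma perm_swap_image (A : Finset Ω) {x y : Ω} (hx : x ∈ A) (hy : y ∉ A) :
    A.image (Equiv.swap x y) = insert y (A.erase x) := by
  ext z
  simp only [Finset.mem_image, Finset.mem_insert, Finset.mem_erase]
  constructor
  · rintro ⟨w, hw, rfl⟩
    rcases eq_or_ne w x with rfl | hwx
    · left; simp
    · rcases eq_or_ne w y with rfl | hwy
      · exact absurd hw hy
      · right; rw [Equiv.swap_apply_of_ne_of_ne hwx hwy]; exact ⟨hwx, hw⟩
  · rintro (rfl | ⟨hzx, hz⟩)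
    · exact ⟨x, hx, by simp⟩
    · exact ⟨z, hz, by rw [Equiv.swap_apply_of_ne_of_ne hzx (fun h => hy (by rw [← h]; exact hz))]⟩

lemma exists_perm_aux (W : Finset Ω) :
    ∀ m (A B : Finset Ω), (A \ B).card = m → A ⊆ W → B ⊆ W → A.card = B.card →
    ∃ σ : Equiv.Perm Ω, (∀ x ∉ W, σ x = x) ∧ A.image σ = B := by
  intro m
  induction m with
  | zero =>
    intro A B h0 _ _ hcard
    have hAB : A = B := by
      have hsub : A ⊆ B := by
        intro x hx
        by_contra hxB
        have hmem : x ∈ A \ B := Finset.mem_sdiff.2 ⟨hx, hxB⟩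
        rw [Finset.card_eq_zero.1 h0] at hmem
        exact absurd hmem (Finset.notMem_empty x)
      exact Finset.eq_of_subset_of_card_le hsub hcard.ge
    exact ⟨1, fun x _ => rfl, by simp [hAB]⟩
  | succ m ih =>
    intro A B hm hA hB hcard
    have hne : (A \ B).Nonempty := Finset.card_pos.1 (by omega)
    obtain ⟨x, hxAB⟩ := hne
    obtain ⟨hxA, hxB⟩ := Finset.mem_sdiff.1 hxAB
    have hBA : (B \ A).Nonempty := by
      refine Finset.card_pos.1 ?_
      rw [← Finset.card_sdiff_comm hcard.symm] at *
      omega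
    obtain ⟨y, hyBA⟩ := hBA
    obtain ⟨hyB, hyA⟩ := Finset.mem_sdiff.1 hyBA
    set A' := insert y (A.erase x) with hA'def
    have hyex : y ∉ A.erase x := fun h => hyA (Finset.mem_of_mem_erase h)
    have hA'W : A' ⊆ W :=
      Finset.insert_subset (hB hyB) ((Finset.erase_subset _ _).trans hA)
    have hA'card : A'.card = B.card := by
      rw [hA'def, Finset.card_insert_of_notMem hyex, Finset.card_erase_of_mem hxA]
      have : 1 ≤ A.card := Finset.card_pos.2 ⟨x, hxA⟩
      omega
    have hsd : A' \ B = (A \ B).erase x := by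
      ext z
      simp only [hA'def, Finset.mem_sdiff, Finset.mem_insert, Finset.mem_erase]
      constructor
      · rintro ⟨rfl | ⟨hzx, hzA⟩, hzB⟩
        · exact absurd hyB hzB
        · exact ⟨hzx, hzA, hzB⟩
      · rintro ⟨hzx, hzA, hzB⟩
        exact ⟨Or.inr ⟨hzx, hzA⟩, hzB⟩
    have hsdcard : (A' \ B).card = m := by
      rw [hsd, Finset.card_erase_of_mem hxAB, hm]
      omega
    obtain ⟨σ', hfix', himg'⟩ := ih A' B hsdcard hA'W hB hA'card
    refine ⟨(Equiv.swap x y).trans σ', ?_, ?_⟩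
    · intro z hz
      have hzx : z ≠ x := fun h => hz (h ▸ hA hxA)
      have hzy : z ≠ y := fun h => hz (h ▸ hB hyB)
      simp only [Equiv.trans_apply, Equiv.swap_apply_of_ne_of_ne hzx hzy]
      exact hfix' z hz
    · have : A.image ⇑((Equiv.swap x y).trans σ') = (A.image (Equiv.swap x y)).image σ' := by
        rw [Finset.image_image]; rfl
      rw [this, perm_swap_image A hxA hyA, ← hA'def, himg']

lemma perm_mem_iff {σ : Equiv.Perm Ω} {W : Finset Ω} (hfix : ∀ x ∉ W, σ x = x) (x : Ω) :
    x ∈ W ↔ σ x ∈ W := by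
  constructor
  · intro hx
    by_contra h
    have h2 : σ (σ x) = σ x := hfix _ h
    exact h (by rw [σ.injective h2]; exact hx)
  · intro h
    by_contra hx
    rw [hfix x hx] at h
    exact hx h

lemma exists_perm_UV [Fintype Ω] (U V : Finset Ω) (hUV : Disjoint U V) (hunion : U ∪ V = Finset.univ)
    (s t : Finset Ω)
    (h1 : (s ∩ U).card = (t ∩ U).card) (h2 : (s ∩ V).card = (t ∩ V).card) :
    ∃ g : Equiv.Perm Ω, (∀ x : Ω, x ∈ U ↔ g x ∈ U) ∧ s.image g = t := by
  have hcompl : ∀ x : Ω, x ∈ U ↔ x ∉ V := by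
    intro x
    constructor
    · exact fun hx hv => (Finset.disjoint_left.1 hUV hx) hv
    · intro hv
      have hx : x ∈ U ∪ V := hunion ▸ Finset.mem_univ x
      rcases Finset.mem_union.1 hx with h | h
      · exact h
      · exact absurd h hv
  obtain ⟨σU, hfixU, himgU⟩ :=
    exists_perm_aux U _ (s ∩ U) (t ∩ U) rfl Finset.inter_subset_right
      Finset.inter_subset_right h1
  obtain ⟨σV, hfixV, himgV⟩ :=
    exists_perm_aux V _ (s ∩ V) (t ∩ V) rfl Finset.inter_subset_right
      Finset.inter_subset_right h2
  refine ⟨σU.trans σV, ?_, ?_⟩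
  · intro x
    have e1 : x ∈ U ↔ σU x ∈ U := perm_mem_iff hfixU x
    have e2 : σU x ∈ V ↔ σV (σU x) ∈ V := perm_mem_iff hfixV (σU x)
    simp only [Equiv.trans_apply]
    rw [e1, hcompl, hcompl, e2]
  · have hsplit : s ∩ U ∪ s ∩ V = s := by
      rw [← Finset.inter_union_distrib_left, hunion, Finset.inter_univ]
    have htsplit : t ∩ U ∪ t ∩ V = t := by
      rw [← Finset.inter_union_distrib_left, hunion, Finset.inter_univ]
    have hfixsv : (s ∩ V).image σU = s ∩ V := by
      rw [Finset.image_congr (g := id) (fun z hz => by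
        have hzV : z ∈ V := (Finset.mem_inter.1 hz).2
        exact hfixU z (fun h => (hcompl z).1 h hzV)), Finset.image_id]
    have htU : (t ∩ U).image σV = t ∩ U := by
      rw [Finset.image_congr (g := id) (fun z hz => by
        have hzU : z ∈ U := (Finset.mem_inter.1 hz).2
        exact hfixV z ((hcompl z).1 hzU)), Finset.image_id]
    have hcalc : s.image ⇑(σU.trans σV) = (s.image ⇑σU).image ⇑σV := by
      rw [Finset.image_image]; rfl
    rw [hcalc, ← hsplit, Finset.image_union, himgU, hfixsv, Finset.image_union,
      htU, himgV, htsplit]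

lemma image_inter_of_pres {g : Equiv.Perm Ω} {U : Finset Ω} (hg : ∀ x, x ∈ U ↔ g x ∈ U)
    (s : Finset Ω) : (s.image ⇑g) ∩ U = (s ∩ U).image ⇑g := by
  ext z
  simp only [Finset.mem_inter, Finset.mem_image]
  constructor
  · rintro ⟨⟨w, hw, rfl⟩, hzU⟩
    exact ⟨w, ⟨hw, (hg w).2 hzU⟩, rfl⟩
  · rintro ⟨w, ⟨hw, hwU⟩, rfl⟩
    exact ⟨⟨w, hw, rfl⟩, (hg w).1 hwU⟩

lemma permV_eq_image {k : ℕ} (g : Equiv.Perm Ω) (α : KVert Ω k) :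
    (permV g α).1 = α.1.image ⇑g := by
  simp [permV, Finset.map_eq_image]

end Aux

/-- the codes `C_int(u,v;a,b)` in the listed three cases are
`(Sym(U) × Sym(V))`-neighbour-transitive in `K(n,k)`. -/
theorem stmt4 {Ω : Type*} [Fintype Ω] [DecidableEq Ω] {n k u v a b : ℕ}
    (U V : Finset Ω) (hUV : Disjoint U V) (hunion : U ∪ V = Finset.univ)
    (hUne : U.Nonempty) (hVne : V.Nonempty)
    (hu : U.card = u) (hv : V.card = v)
    (hab : a + b = k) (hau : a ≤ u) (hbv : b ≤ v)
    (hn : n = u + v) (hcard : Fintype.card Ω = n)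
    (hk2 : 2 ≤ k) (hkn : 2 * k + 1 ≤ n)
    (hcases : (u = 1 ∧ a = 0) ∨ (n = 2 * k + 1 ∧ u = 2 * a ∧ v = 2 * b + 1) ∨ u = a)
    (C : Set (KVert Ω k))
    (hCdef : C = {α | (α.1 ∩ U).card = a ∧ (α.1 ∩ V).card = b})
    (G : Set (Equiv.Perm Ω)) (hGdef : G = {g | ∀ x : Ω, x ∈ U ↔ g x ∈ U}) :
    G ⊆ autC C ∧ transOn G C ∧ transOn G (nbrs C 1) := by
  have hcompl : ∀ x : Ω, x ∈ U ↔ x ∉ V := by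
    intro x
    constructor
    · exact fun hx hv => (Finset.disjoint_left.1 hUV hx) hv
    · intro hv
      have hx : x ∈ U ∪ V := hunion ▸ Finset.mem_univ x
      rcases Finset.mem_union.1 hx with h | h
      · exact h
      · exact absurd h hv
  -- a permutation preserving U also preserves V
  have hGV : ∀ g : Equiv.Perm Ω, g ∈ G → ∀ x : Ω, x ∈ V ↔ g x ∈ V := by
    intro g hg x
    have hgU : ∀ y : Ω, y ∈ U ↔ g y ∈ U := by rw [hGdef] at hg; exact hg
    have h1 : ∀ y : Ω, y ∈ V ↔ y ∉ U := by
      intro y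
      constructor
      · intro hy hyU; exact (hcompl y).1 hyU hy
      · intro hy
        have hmem : y ∈ U ∪ V := hunion ▸ Finset.mem_univ y
        rcases Finset.mem_union.1 hmem with h | h
        · exact absurd h hy
        · exact h
    rw [h1, h1, not_iff_not]
    exact hgU x
  -- membership in C after applying g ∈ G
  have hmemC : ∀ g : Equiv.Perm Ω, g ∈ G → ∀ α ∈ C, permV g α ∈ C := by
    intro g hg α hα
    rw [hCdef] at hα ⊢
    obtain ⟨ha, hb⟩ := hα
    have hgU : ∀ x : Ω, x ∈ U ↔ g x ∈ U := by rw [hGdef] at hg; exact hg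
    have hgV := hGV g hg
    constructor
    · rw [permV_eq_image, image_inter_of_pres hgU,
        Finset.card_image_of_injective _ g.injective]
      exact ha
    · rw [permV_eq_image, image_inter_of_pres hgV,
        Finset.card_image_of_injective _ g.injective]
      exact hb
  have hGinv : ∀ g : Equiv.Perm Ω, g ∈ G → g.symm ∈ G := by
    intro g hg
    rw [hGdef] at hg ⊢
    intro x
    have := hg (g.symm x)
    rw [Equiv.apply_symm_apply] at this
    exact this.symm
  -- cardinality splitting
  have hsplit : ∀ s : Finset Ω, (s ∩ U).card + (s ∩ V).card = s.card := by
    intro s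
    rw [← Finset.card_union_of_disjoint (hUV.mono Finset.inter_subset_right
      Finset.inter_subset_right), ← Finset.inter_union_distrib_left, hunion,
      Finset.inter_univ]
  refine ⟨?_, ?_, ?_⟩
  · -- G ⊆ autC C
    intro g hg
    show (permV g) '' C = C
    apply Set.eq_of_subset_of_subset
    · rintro _ ⟨α, hα, rfl⟩
      exact hmemC g hg α hα
    · intro α hα
      refine ⟨permV g.symm α, hmemC g.symm (hGinv g hg) α hα, ?_⟩
      apply Subtype.ext
      rw [permV_eq_image, permV_eq_image, Finset.image_image]
      simp
  · -- transOn G C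
    intro x hx y hy
    rw [hCdef] at hx hy
    obtain ⟨g, hgU, himg⟩ := exists_perm_UV U V hUV hunion x.1 y.1
      (by rw [hx.1, hy.1]) (by rw [hx.2, hy.2])
    refine ⟨g, by rw [hGdef]; exact hgU, ?_⟩
    apply Subtype.ext
    rw [permV_eq_image, himg]
  · -- transOn G (nbrs C 1)
    have key : ∀ z : KVert Ω k, z ∈ nbrs C 1 →
        a + (z.1 ∩ U).card ≤ u ∧ b + (z.1 ∩ V).card ≤ v ∧
        (z.1 ∩ U).card + (z.1 ∩ V).card = k ∧ (z.1 ∩ U).card ≠ a := by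
      intro z hz
      obtain ⟨⟨α, hαC, hαdist⟩, hlow⟩ := hz
      have hadj : (kneser Ω k).Adj α z := SimpleGraph.dist_eq_one_iff_adj.1 hαdist
      have hdisj : Disjoint α.1 z.1 := hadj.2
      rw [hCdef] at hαC
      obtain ⟨haU, haV⟩ := hαC
      have hUb : a + (z.1 ∩ U).card ≤ u := by
        rw [← haU, ← hu,
          ← Finset.card_union_of_disjoint (hdisj.mono Finset.inter_subset_left
            Finset.inter_subset_left)]
        exact Finset.card_le_card (Finset.union_subset Finset.inter_subset_right
          Finset.inter_subset_right)
      have hVb : b + (z.1 ∩ V).card ≤ v := by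
        rw [← haV, ← hv,
          ← Finset.card_union_of_disjoint (hdisj.mono Finset.inter_subset_left
            Finset.inter_subset_left)]
        exact Finset.card_le_card (Finset.union_subset Finset.inter_subset_right
          Finset.inter_subset_right)
      have hsum : (z.1 ∩ U).card + (z.1 ∩ V).card = k := by
        rw [hsplit z.1, z.2]
      have hzC : z ∉ C := by
        intro hzC
        have := hlow z hzC
        rw [SimpleGraph.dist_self] at this
        omega
      refine ⟨hUb, hVb, hsum, ?_⟩
      intro hEq
      apply hzC
      rw [hCdef]
      exact ⟨hEq, by omega⟩
    intro x hx y hy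
    obtain ⟨hx1, hx2, hx3, hx4⟩ := key x hx
    obtain ⟨hy1, hy2, hy3, hy4⟩ := key y hy
    have huP : 1 ≤ u := hu ▸ Finset.card_pos.2 hUne
    have hEqU : (x.1 ∩ U).card = (y.1 ∩ U).card := by
      rcases hcases with ⟨h1, h2⟩ | ⟨h1, h2, h3⟩ | h1 <;> omega
    have hEqV : (x.1 ∩ V).card = (y.1 ∩ V).card := by omega
    obtain ⟨g, hgU, himg⟩ := exists_perm_UV U V hUV hunion x.1 y.1 hEqU hEqV
    refine ⟨g, by rw [hGdef]; exact hgU, ?_⟩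
    apply Subtype.ext
    rw [permV_eq_image, himg]
end

section
/- Let C be a neighbour-transitive code (|C| ≥ 2) in K(n,k) with 2 ≤ k ≤ (n−1)/2. Then the setwise stabiliser Aut(C) of C in Sym(Ω) has at most 2 orbits on Ω. Equivalently, there do not exist three pairwise disjoint nonempty sets W₁, W₂, W₃ covering Ω such that Aut(C) ≤ Sym(W₁) × Sym(W₂) × Sym(W₃). -/
open Finset

section Aux

variable {Ω : Type*} [Fintype Ω] [DecidableEq Ω] {k : ℕ}

lemma map_inter_eq (g : Equiv.Perm Ω) (a V : Finset Ω) (h : ∀ z : Ω, z ∈ V ↔ g z ∈ V) :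
    a.map g.toEmbedding ∩ V = (a ∩ V).map g.toEmbedding := by
  ext z
  simp only [Finset.mem_inter, Finset.mem_map, Equiv.coe_toEmbedding]
  constructor
  · rintro ⟨⟨w, hw, rfl⟩, hzv⟩
    exact ⟨w, ⟨hw, (h w).mpr hzv⟩, rfl⟩
  · rintro ⟨w, ⟨hw, hwv⟩, rfl⟩
    exact ⟨⟨w, hw, rfl⟩, (h w).mp hwv⟩

lemma same_type {C T : Set (KVert Ω k)} (hT : transOn (autC C) T) {V : Finset Ω}
    (hpre : ∀ g ∈ autC C, ∀ z : Ω, z ∈ V ↔ g z ∈ V) {x y : KVert Ω k}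
    (hx : x ∈ T) (hy : y ∈ T) : (x.1 ∩ V).card = (y.1 ∩ V).card := by
  obtain ⟨g, hg, hgx⟩ := hT x hx y hy
  have hy1 : y.1 = x.1.map g.toEmbedding := by rw [← hgx]; rfl
  rw [hy1, map_inter_eq g x.1 V (hpre g hg), Finset.card_map]

lemma kneser_reachable (hk : 1 ≤ k) (hkn : 2 * k + 1 ≤ Fintype.card Ω) :
    ∀ m : ℕ, ∀ a b : KVert Ω k, (a.1 \ b.1).card ≤ m → (kneser Ω k).Reachable a b := by
  intro m
  induction m with
  | zero =>
    intro a b h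
    have hsub : a.1 ⊆ b.1 := by
      rw [← Finset.sdiff_eq_empty_iff_subset]
      exact Finset.card_eq_zero.mp (Nat.le_zero.mp h)
    have : a = b := Subtype.ext (Finset.eq_of_subset_of_card_le hsub (by rw [a.2, b.2]))
    exact this ▸ SimpleGraph.Reachable.refl a
  | succ m ih =>
    intro a b h
    by_cases hab : a = b
    · exact hab ▸ SimpleGraph.Reachable.refl a
    have hd : (a.1 \ b.1).Nonempty := by
      rw [Finset.nonempty_iff_ne_empty]
      intro he
      exact hab (Subtype.ext (Finset.eq_of_subset_of_card_le
        (Finset.sdiff_eq_empty_iff_subset.mp he) (by rw [a.2, b.2])))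
    obtain ⟨x, hx⟩ := hd
    have hd' : (b.1 \ a.1).Nonempty := by
      rw [Finset.nonempty_iff_ne_empty]
      intro he
      exact hab (Subtype.ext (Finset.eq_of_subset_of_card_le
        (Finset.sdiff_eq_empty_iff_subset.mp he) (by rw [a.2, b.2])).symm)
    obtain ⟨y, hy⟩ := hd'
    have hxa : x ∈ a.1 := (Finset.mem_sdiff.mp hx).1
    have hxb : x ∉ b.1 := (Finset.mem_sdiff.mp hx).2
    have hyb : y ∈ b.1 := (Finset.mem_sdiff.mp hy).1
    have hya : y ∉ a.1 := (Finset.mem_sdiff.mp hy).2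
    have hyea : y ∉ a.1.erase x := fun hy' => hya (Finset.mem_of_mem_erase hy')
    have hcardA' : (insert y (a.1.erase x)).card = k := by
      rw [Finset.card_insert_of_notMem hyea, Finset.card_erase_of_mem hxa, a.2]
      omega
    set A' : KVert Ω k := ⟨insert y (a.1.erase x), hcardA'⟩ with hA'
    have hcins : (insert y a.1).card = k + 1 := by
      rw [Finset.card_insert_of_notMem hya, a.2]
    have hcompl : k ≤ (insert y a.1)ᶜ.card := by
      rw [Finset.card_compl, hcins]
      omega
    obtain ⟨D, hDsub, hDcard⟩ := Finset.exists_subset_card_eq hcompl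
    set Dv : KVert Ω k := ⟨D, hDcard⟩ with hDv
    have hdisj : Disjoint a.1 D := by
      rw [Finset.disjoint_right]
      intro d hdD hda
      exact (Finset.mem_compl.mp (hDsub hdD)) (Finset.mem_insert_of_mem hda)
    have hadj1 : (kneser Ω k).Adj a Dv := by
      refine ⟨fun hEq => ?_, hdisj⟩
      have : x ∈ D := by rw [show D = a.1 from congrArg Subtype.val hEq.symm]; exact hxa
      exact Finset.disjoint_left.mp hdisj hxa this
    have hdisj2 : Disjoint D A'.1 := by
      rw [Finset.disjoint_left]
      intro d hdD hdA'
      refine (Finset.mem_compl.mp (hDsub hdD)) ?_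
      rcases Finset.mem_insert.mp hdA' with h' | h'
      · exact h' ▸ Finset.mem_insert_self y a.1
      · exact Finset.mem_insert_of_mem (Finset.mem_of_mem_erase h')
    have hadj2 : (kneser Ω k).Adj Dv A' := by
      refine ⟨fun hEq => ?_, hdisj2⟩
      have hyA' : y ∈ A'.1 := Finset.mem_insert_self y _
      have : y ∈ D := by rw [show D = A'.1 from congrArg Subtype.val hEq]; exact hyA'
      exact Finset.disjoint_left.mp hdisj2 this hyA'
    have hstep : (A'.1 \ b.1).card ≤ m := by
      have hsub : A'.1 \ b.1 ⊆ (a.1 \ b.1).erase x := by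
        intro z hz
        obtain ⟨hz1, hz2⟩ := Finset.mem_sdiff.mp hz
        rcases Finset.mem_insert.mp hz1 with h' | h'
        · exact absurd (h' ▸ hyb) hz2
        · exact Finset.mem_erase.mpr ⟨(Finset.mem_erase.mp h').1,
            Finset.mem_sdiff.mpr ⟨Finset.mem_of_mem_erase h', hz2⟩⟩
      have := Finset.card_le_card hsub
      rw [Finset.card_erase_of_mem hx] at this
      omega
    exact (hadj1.reachable.trans hadj2.reachable).trans (ih A' b hstep)

lemma mem_C_or {C : Set (KVert Ω k)} (hk : 1 ≤ k)
    (hconn : ∀ a b : KVert Ω k, (kneser Ω k).Reachable a b)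
    {α : KVert Ω k} (hα : α ∈ C) {S : KVert Ω k} (hdisj : Disjoint α.1 S.1) :
    S ∈ C ∨ S ∈ nbrs C 1 := by
  by_cases hSC : S ∈ C
  · exact Or.inl hSC
  right
  have hne : α ≠ S := by
    intro h
    have hpos : 0 < α.1.card := by rw [α.2]; omega
    obtain ⟨z, hz⟩ := Finset.card_pos.mp hpos
    have hzS : z ∈ S.1 := by rw [← h]; exact hz
    exact (Finset.disjoint_left.mp hdisj hz) hzS
  refine ⟨⟨α, hα, SimpleGraph.dist_eq_one_iff_adj.mpr ⟨hne, hdisj⟩⟩, fun β hβ => ?_⟩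
  exact (hconn β S).pos_dist_of_ne (fun h => hSC (h ▸ hβ))

lemma map_swap_eq {x y : Ω} {s : Finset Ω} (hx : x ∈ s) (hy : y ∈ s) :
    s.map (Equiv.swap x y).toEmbedding = s := by
  have hmem : ∀ z ∈ s, Equiv.swap x y z ∈ s := by
    intro z hz
    rcases eq_or_ne z x with rfl | hzx
    · rwa [Equiv.swap_apply_left]
    rcases eq_or_ne z y with rfl | hzy
    · rwa [Equiv.swap_apply_right]
    · rwa [Equiv.swap_apply_of_ne_of_ne hzx hzy]
  ext z
  simp only [Finset.mem_map, Equiv.coe_toEmbedding]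
  constructor
  · rintro ⟨w, hw, rfl⟩
    exact hmem w hw
  · intro hz
    exact ⟨Equiv.swap x y z, hmem z hz, Equiv.swap_apply_self x y z⟩

lemma swap_mem_autC {C : Set (KVert Ω k)} {x y : Ω}
    (h : ∀ β ∈ C, x ∈ β.1 ∧ y ∈ β.1) : Equiv.swap x y ∈ autC C := by
  have hfix : ∀ β ∈ C, permV (Equiv.swap x y) β = β := fun β hβ =>
    Subtype.ext (map_swap_eq (h β hβ).1 (h β hβ).2)
  show _ '' C = C
  ext z
  constructor
  · rintro ⟨β, hβ, rfl⟩
    rw [hfix β hβ]; exact hβ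
  · intro hz
    exact ⟨z, hz, hfix z hz⟩

lemma erase_inter_of_not_mem {x : Ω} {s V : Finset Ω} (hx : x ∉ V) :
    (s.erase x) ∩ V = s ∩ V := by
  ext z
  simp only [Finset.mem_inter, Finset.mem_erase]
  constructor
  · rintro ⟨⟨_, hz⟩, hv⟩
    exact ⟨hz, hv⟩
  · rintro ⟨hz, hv⟩
    exact ⟨⟨fun e => hx (e ▸ hv), hz⟩, hv⟩

lemma erase_inter_card {x : Ω} {s V : Finset Ω} (hxs : x ∈ s) (hxV : x ∈ V) :
    ((s.erase x) ∩ V).card = (s ∩ V).card - 1 := by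
  have h : (s.erase x) ∩ V = (s ∩ V).erase x := by
    ext z
    simp only [Finset.mem_inter, Finset.mem_erase]
    tauto
  rw [h, Finset.card_erase_of_mem (Finset.mem_inter.mpr ⟨hxs, hxV⟩)]

end Aux

section Cases

variable {Ω : Type*} [Fintype Ω] [DecidableEq Ω] {k : ℕ}

lemma subset_of_inter_compl_empty {V s : Finset Ω} (hV : V ∩ sᶜ = ∅) : V ⊆ s := by
  intro z hz
  by_contra hzα
  have : z ∈ V ∩ sᶜ := Finset.mem_inter.mpr ⟨hz, Finset.mem_compl.mpr hzα⟩
  rw [hV] at this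
  exact absurd this (Finset.notMem_empty z)

/-- Case: two of the parts are contained in `α`: a transposition across them
fixes every codeword, contradicting preservation of the parts. -/
lemma case_one {C : Set (KVert Ω k)} (h0 : transOn (autC C) C)
    {α : KVert Ω k} (hα : α ∈ C)
    {Va Vb : Finset Ω} (hd : Disjoint Va Vb) (ha : Va.Nonempty) (hb : Vb.Nonempty)
    (hpa : ∀ g ∈ autC C, ∀ z : Ω, z ∈ Va ↔ g z ∈ Va)
    (hpb : ∀ g ∈ autC C, ∀ z : Ω, z ∈ Vb ↔ g z ∈ Vb)
    (hUa : Va ∩ α.1ᶜ = ∅) (hUb : Vb ∩ α.1ᶜ = ∅) : False := by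
  have hVaα : Va ⊆ α.1 := subset_of_inter_compl_empty hUa
  have hVbα : Vb ⊆ α.1 := subset_of_inter_compl_empty hUb
  obtain ⟨x, hx⟩ := ha
  obtain ⟨y, hy⟩ := hb
  have hsubC : ∀ {V : Finset Ω}, V ⊆ α.1 →
      (∀ g ∈ autC C, ∀ z : Ω, z ∈ V ↔ g z ∈ V) → ∀ β ∈ C, V ⊆ β.1 := by
    intro V hVα hpV β hβ
    have hcards : (β.1 ∩ V).card = (α.1 ∩ V).card := same_type h0 hpV hβ hα
    have hαV : α.1 ∩ V = V := Finset.inter_eq_right.mpr hVα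
    rw [hαV] at hcards
    have heq : β.1 ∩ V = V :=
      Finset.eq_of_subset_of_card_le Finset.inter_subset_right (le_of_eq hcards.symm)
    rw [← heq]
    exact Finset.inter_subset_left
  have hg : Equiv.swap x y ∈ autC C :=
    swap_mem_autC (fun β hβ => ⟨hsubC hVaα hpa β hβ hx, hsubC hVbα hpb β hβ hy⟩)
  have := (hpa _ hg x).mp hx
  rw [Equiv.swap_apply_left] at this
  exact Finset.disjoint_left.mp hd this hy

/-- Case: parts `Vi`, `Vj` meet `α.1ᶜ` but `Vl` does not: all `k`-subsets of `α.1ᶜ`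
lie in `C₁`, yet two of them have different types. -/
lemma case_two {C : Set (KVert Ω k)} (hk : 2 ≤ k)
    (hconn : ∀ a b : KVert Ω k, (kneser Ω k).Reachable a b)
    (h0 : transOn (autC C) C) (h1 : transOn (autC C) (nbrs C 1))
    {α : KVert Ω k} (hα : α ∈ C)
    {Vi Vj Vl : Finset Ω} (hij : Disjoint Vi Vj) (hlne : Vl.Nonempty)
    (hpi : ∀ g ∈ autC C, ∀ z : Ω, z ∈ Vi ↔ g z ∈ Vi)
    (hpl : ∀ g ∈ autC C, ∀ z : Ω, z ∈ Vl ↔ g z ∈ Vl)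
    (hUi : (Vi ∩ α.1ᶜ).Nonempty) (hUj : (Vj ∩ α.1ᶜ).Nonempty)
    (hUl : Vl ∩ α.1ᶜ = ∅) (hUcard : k + 1 ≤ α.1ᶜ.card) : False := by
  obtain ⟨x, hx⟩ := hUi
  obtain ⟨y, hy⟩ := hUj
  have hxVi : x ∈ Vi := (Finset.mem_inter.mp hx).1
  have hxU : x ∈ α.1ᶜ := (Finset.mem_inter.mp hx).2
  have hyVj : y ∈ Vj := (Finset.mem_inter.mp hy).1
  have hyU : y ∈ α.1ᶜ := (Finset.mem_inter.mp hy).2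
  have hyVi : y ∉ Vi := fun h => Finset.disjoint_left.mp hij h hyVj
  have hxy : x ≠ y := fun h => hyVi (h ▸ hxVi)
  have hpair : ({x, y} : Finset Ω) ⊆ α.1ᶜ := by
    intro z hz
    rcases Finset.mem_insert.mp hz with rfl | hz
    · exact hxU
    · rw [Finset.mem_singleton.mp hz]; exact hyU
  have hpaircard : ({x, y} : Finset Ω).card ≤ k + 1 := by
    have := Finset.card_insert_le x ({y} : Finset Ω)
    simp at this ⊢
    omega
  obtain ⟨P, hsubP, hPU, hPcard⟩ := Finset.exists_subsuperset_card_eq hpair hpaircard hUcard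
  have hxP : x ∈ P := hsubP (Finset.mem_insert_self x {y})
  have hyP : y ∈ P := hsubP (Finset.mem_insert_of_mem (Finset.mem_singleton_self y))
  have hS1card : (P.erase x).card = k := by
    rw [Finset.card_erase_of_mem hxP, hPcard]
    omega
  have hS2card : (P.erase y).card = k := by
    rw [Finset.card_erase_of_mem hyP, hPcard]
    omega
  set S1 : KVert Ω k := ⟨P.erase x, hS1card⟩ with hS1
  set S2 : KVert Ω k := ⟨P.erase y, hS2card⟩ with hS2
  -- no subset of α.1ᶜ is a codeword, because codewords meet Vl and subsets of α.1ᶜ don't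
  have hnotC : ∀ S : KVert Ω k, S.1 ⊆ α.1ᶜ → S ∉ C := by
    intro S hSU hSC
    have hcards : (S.1 ∩ Vl).card = (α.1 ∩ Vl).card := same_type h0 hpl hSC hα
    have hSVl : S.1 ∩ Vl = ∅ := by
      rw [Finset.eq_empty_iff_forall_notMem]
      intro z hz
      obtain ⟨hzS, hzVl⟩ := Finset.mem_inter.mp hz
      have : z ∈ Vl ∩ α.1ᶜ := Finset.mem_inter.mpr ⟨hzVl, hSU hzS⟩
      rw [hUl] at this
      exact absurd this (Finset.notMem_empty z)
    have hαVl : α.1 ∩ Vl = Vl :=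
      Finset.inter_eq_right.mpr (subset_of_inter_compl_empty hUl)
    rw [hSVl, hαVl, Finset.card_empty] at hcards
    obtain ⟨w, hw⟩ := hlne
    have : 0 < Vl.card := Finset.card_pos.mpr ⟨w, hw⟩
    omega
  have hmem : ∀ S : KVert Ω k, S.1 ⊆ α.1ᶜ → S ∈ nbrs C 1 := by
    intro S hSU
    have hdisj : Disjoint α.1 S.1 := by
      rw [Finset.disjoint_right]
      intro d hd
      exact Finset.mem_compl.mp (hSU hd)
    rcases mem_C_or (by omega) hconn hα hdisj with h | h
    · exact absurd h (hnotC S hSU)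
    · exact h
  have hS1U : S1.1 ⊆ α.1ᶜ := fun z hz => hPU (Finset.mem_of_mem_erase hz)
  have hS2U : S2.1 ⊆ α.1ᶜ := fun z hz => hPU (Finset.mem_of_mem_erase hz)
  have heq : (S1.1 ∩ Vi).card = (S2.1 ∩ Vi).card :=
    same_type h1 hpi (hmem S1 hS1U) (hmem S2 hS2U)
  have h1c : (S1.1 ∩ Vi).card = (P ∩ Vi).card - 1 := erase_inter_card hxP hxVi
  have h2c : (S2.1 ∩ Vi).card = (P ∩ Vi).card := by
    rw [hS2]; exact congrArg Finset.card (erase_inter_of_not_mem hyVi)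
  have hpos : 0 < (P ∩ Vi).card := Finset.card_pos.mpr ⟨x, Finset.mem_inter.mpr ⟨hxP, hxVi⟩⟩
  omega

/-- Case: all three parts meet `α.1ᶜ`: three `k`-subsets of `α.1ᶜ` with pairwise
different types, two of which lie together in `C` or in `C₁`. -/
lemma case_three {C : Set (KVert Ω k)} (hk : 2 ≤ k)
    (hconn : ∀ a b : KVert Ω k, (kneser Ω k).Reachable a b)
    (h0 : transOn (autC C) C) (h1 : transOn (autC C) (nbrs C 1))
    {α : KVert Ω k} (hα : α ∈ C)
    {V1 V2 V3 : Finset Ω} (d12 : Disjoint V1 V2) (d13 : Disjoint V1 V3) (d23 : Disjoint V2 V3)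
    (hp1 : ∀ g ∈ autC C, ∀ z : Ω, z ∈ V1 ↔ g z ∈ V1)
    (hp2 : ∀ g ∈ autC C, ∀ z : Ω, z ∈ V2 ↔ g z ∈ V2)
    (hU1 : (V1 ∩ α.1ᶜ).Nonempty) (hU2 : (V2 ∩ α.1ᶜ).Nonempty) (hU3 : (V3 ∩ α.1ᶜ).Nonempty)
    (hUcard : k + 1 ≤ α.1ᶜ.card) : False := by
  obtain ⟨x1, hx1⟩ := hU1
  obtain ⟨x2, hx2⟩ := hU2
  obtain ⟨x3, hx3⟩ := hU3
  have hx1V : x1 ∈ V1 := (Finset.mem_inter.mp hx1).1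
  have hx2V : x2 ∈ V2 := (Finset.mem_inter.mp hx2).1
  have hx3V : x3 ∈ V3 := (Finset.mem_inter.mp hx3).1
  have hx1U : x1 ∈ α.1ᶜ := (Finset.mem_inter.mp hx1).2
  have hx2U : x2 ∈ α.1ᶜ := (Finset.mem_inter.mp hx2).2
  have hx3U : x3 ∈ α.1ᶜ := (Finset.mem_inter.mp hx3).2
  have hx2V1 : x2 ∉ V1 := fun h => Finset.disjoint_left.mp d12 h hx2V
  have hx3V1 : x3 ∉ V1 := fun h => Finset.disjoint_left.mp d13 h hx3V
  have hx3V2 : x3 ∉ V2 := fun h => Finset.disjoint_left.mp d23 h hx3V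
  have h12ne : x1 ≠ x2 := fun h => hx2V1 (h ▸ hx1V)
  have h13ne : x1 ≠ x3 := fun h => hx3V1 (h ▸ hx1V)
  have h23ne : x2 ≠ x3 := fun h => hx3V2 (h ▸ hx2V)
  have htrip : ({x1, x2, x3} : Finset Ω) ⊆ α.1ᶜ := by
    intro z hz
    rcases Finset.mem_insert.mp hz with rfl | hz
    · exact hx1U
    rcases Finset.mem_insert.mp hz with rfl | hz
    · exact hx2U
    · rw [Finset.mem_singleton.mp hz]; exact hx3U
  have htripcard : ({x1, x2, x3} : Finset Ω).card ≤ k + 1 := by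
    have h3 : ({x1, x2, x3} : Finset Ω).card ≤ 3 := by
      apply le_trans (Finset.card_insert_le _ _)
      have := Finset.card_insert_le x2 ({x3} : Finset Ω)
      simp at this ⊢
      omega
    omega
  obtain ⟨P, hsubP, hPU, hPcard⟩ := Finset.exists_subsuperset_card_eq htrip htripcard hUcard
  have hx1P : x1 ∈ P := hsubP (by simp)
  have hx2P : x2 ∈ P := hsubP (by simp)
  have hx3P : x3 ∈ P := hsubP (by simp)
  have hScard : ∀ {x : Ω}, x ∈ P → (P.erase x).card = k := fun hx => by
    rw [Finset.card_erase_of_mem hx, hPcard]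
    omega
  set S1 : KVert Ω k := ⟨P.erase x1, hScard hx1P⟩ with hS1
  set S2 : KVert Ω k := ⟨P.erase x2, hScard hx2P⟩ with hS2
  set S3 : KVert Ω k := ⟨P.erase x3, hScard hx3P⟩ with hS3
  have hmem : ∀ S : KVert Ω k, S.1 ⊆ α.1ᶜ → S ∈ C ∨ S ∈ nbrs C 1 := by
    intro S hSU
    refine mem_C_or (by omega) hconn hα ?_
    rw [Finset.disjoint_right]
    intro d hd
    exact Finset.mem_compl.mp (hSU hd)
  have hSU : ∀ {x : Ω}, (P.erase x) ⊆ α.1ᶜ := fun {x} z hz =>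
    hPU (Finset.mem_of_mem_erase hz)
  -- type differences
  have hpos1 : 0 < (P ∩ V1).card := Finset.card_pos.mpr ⟨x1, Finset.mem_inter.mpr ⟨hx1P, hx1V⟩⟩
  have hpos2 : 0 < (P ∩ V2).card := Finset.card_pos.mpr ⟨x2, Finset.mem_inter.mpr ⟨hx2P, hx2V⟩⟩
  have c11 : (S1.1 ∩ V1).card = (P ∩ V1).card - 1 := erase_inter_card hx1P hx1V
  have c21 : (S2.1 ∩ V1).card = (P ∩ V1).card :=
    congrArg Finset.card (erase_inter_of_not_mem hx2V1)
  have c31 : (S3.1 ∩ V1).card = (P ∩ V1).card :=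
    congrArg Finset.card (erase_inter_of_not_mem hx3V1)
  have c22 : (S2.1 ∩ V2).card = (P ∩ V2).card - 1 := erase_inter_card hx2P hx2V
  have c32 : (S3.1 ∩ V2).card = (P ∩ V2).card :=
    congrArg Finset.card (erase_inter_of_not_mem hx3V2)
  have ne12 : (S1.1 ∩ V1).card ≠ (S2.1 ∩ V1).card := by omega
  have ne13 : (S1.1 ∩ V1).card ≠ (S3.1 ∩ V1).card := by omega
  have ne23 : (S2.1 ∩ V2).card ≠ (S3.1 ∩ V2).card := by omega
  rcases hmem S1 hSU with m1 | m1 <;> rcases hmem S2 hSU with m2 | m2 <;>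
    rcases hmem S3 hSU with m3 | m3
  · exact ne12 (same_type h0 hp1 m1 m2)
  · exact ne12 (same_type h0 hp1 m1 m2)
  · exact ne13 (same_type h0 hp1 m1 m3)
  · exact ne23 (same_type h1 hp2 m2 m3)
  · exact ne23 (same_type h0 hp2 m2 m3)
  · exact ne13 (same_type h1 hp1 m1 m3)
  · exact ne12 (same_type h1 hp1 m1 m2)
  · exact ne12 (same_type h1 hp1 m1 m2)

end Cases

/-- the automorphism group of a neighbour-transitive code in `K(n,k)` has
at most two orbits on `Ω`: it cannot preserve three pairwise disjoint nonempty sets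
covering `Ω`. -/
theorem stmt7 {Ω : Type*} [Fintype Ω] [DecidableEq Ω] {n k : ℕ}
    (hcard : Fintype.card Ω = n) (hk : 2 ≤ k) (hkn : 2 * k + 1 ≤ n)
    (C : Set (KVert Ω k)) (hC : C.Nontrivial)
    (h0 : transOn (autC C) C) (h1 : transOn (autC C) (nbrs C 1))
    (W1 W2 W3 : Finset Ω)
    (hne1 : W1.Nonempty) (hne2 : W2.Nonempty) (hne3 : W3.Nonempty)
    (h12 : Disjoint W1 W2) (h13 : Disjoint W1 W3) (h23 : Disjoint W2 W3)
    (hcover : W1 ∪ W2 ∪ W3 = Finset.univ)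
    (hpres : ∀ g ∈ autC C, ∀ x : Ω,
      (x ∈ W1 ↔ g x ∈ W1) ∧ (x ∈ W2 ↔ g x ∈ W2) ∧ (x ∈ W3 ↔ g x ∈ W3)) :
    False := by
  obtain ⟨α, hα, -, -, -⟩ := hC
  have hkcard : 2 * k + 1 ≤ Fintype.card Ω := by omega
  have hconn : ∀ a b : KVert Ω k, (kneser Ω k).Reachable a b :=
    fun a b => kneser_reachable (by omega) hkcard ((a.1 \ b.1).card) a b le_rfl
  have hp1 : ∀ g ∈ autC C, ∀ z : Ω, z ∈ W1 ↔ g z ∈ W1 :=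
    fun g hg z => (hpres g hg z).1
  have hp2 : ∀ g ∈ autC C, ∀ z : Ω, z ∈ W2 ↔ g z ∈ W2 :=
    fun g hg z => (hpres g hg z).2.1
  have hp3 : ∀ g ∈ autC C, ∀ z : Ω, z ∈ W3 ↔ g z ∈ W3 :=
    fun g hg z => (hpres g hg z).2.2
  have hUcard : k + 1 ≤ α.1ᶜ.card := by
    rw [Finset.card_compl, α.2, hcard]
    omega
  by_cases E1 : (W1 ∩ α.1ᶜ).Nonempty <;> by_cases E2 : (W2 ∩ α.1ᶜ).Nonempty <;>
    by_cases E3 : (W3 ∩ α.1ᶜ).Nonempty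
  · exact case_three hk hconn h0 h1 hα h12 h13 h23 hp1 hp2 E1 E2 E3 hUcard
  · exact case_two hk hconn h0 h1 hα h12 hne3 hp1 hp3 E1 E2
      (Finset.not_nonempty_iff_eq_empty.mp E3) hUcard
  · exact case_two hk hconn h0 h1 hα h13 hne2 hp1 hp2 E1 E3
      (Finset.not_nonempty_iff_eq_empty.mp E2) hUcard
  · exact case_one h0 hα h23 hne2 hne3 hp2 hp3
      (Finset.not_nonempty_iff_eq_empty.mp E2) (Finset.not_nonempty_iff_eq_empty.mp E3)
  · exact case_two hk hconn h0 h1 hα h23 hne1 hp2 hp1 E2 E3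
      (Finset.not_nonempty_iff_eq_empty.mp E1) hUcard
  · exact case_one h0 hα h13 hne1 hne3 hp1 hp3
      (Finset.not_nonempty_iff_eq_empty.mp E1) (Finset.not_nonempty_iff_eq_empty.mp E3)
  · exact case_one h0 hα h12 hne1 hne2 hp1 hp2
      (Finset.not_nonempty_iff_eq_empty.mp E1) (Finset.not_nonempty_iff_eq_empty.mp E2)
  · -- all three intersections empty: but α.1ᶜ is nonempty and covered by the parts
    have hU : (α.1ᶜ : Finset Ω).Nonempty := Finset.card_pos.mp (by omega)
    obtain ⟨z, hz⟩ := hU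
    have hzu : z ∈ W1 ∪ W2 ∪ W3 := by rw [hcover]; exact Finset.mem_univ z
    rcases Finset.mem_union.mp hzu with hzu | hzu
    · rcases Finset.mem_union.mp hzu with hzu | hzu
      · exact E1 ⟨z, Finset.mem_inter.mpr ⟨hzu, hz⟩⟩
      · exact E2 ⟨z, Finset.mem_inter.mpr ⟨hzu, hz⟩⟩
    · exact E3 ⟨z, Finset.mem_inter.mpr ⟨hzu, hz⟩⟩
end

section
/- Let C be a neighbour-transitive code (|C| ≥ 2) in the odd graph O_{k+1} = K(2k+1,k) with minimum distance δ ≥ 2, and suppose Aut(C) preserves a partition B = {B₁,…,B_a} of Ω into a blocks each of size b, where ab = 2k+1 and a,b ≥ 2, on which Aut(C) acts transitively. Then there exist integers a₀, a₁, b₁ such that for every α ∈ C the multiset {|α ∩ Bᵢ| : i = 1,…,a} equals {b with multiplicity a₀, b₁ with multiplicity a₁}; i.e. each block is either fully contained in α or meets α in exactly b₁ points. -/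
open Finset

lemma key_count {T₁ T₂ : Multiset ℕ} {u v : ℕ} (hu : 1 ≤ u) (hv : 1 ≤ v)
    (h1 : u ::ₘ T₁ = v ::ₘ T₂) (h2 : (u-1) ::ₘ T₁ = (v-1) ::ₘ T₂) : u = v := by
  by_contra huv
  have e1 := congrArg (Multiset.count u) h1
  have e2 := congrArg (Multiset.count u) h2
  simp only [Multiset.count_cons] at e1 e2
  split_ifs at e1 e2 <;> omega

lemma kneser_adj {Ω : Type*} [DecidableEq Ω] {k : ℕ} (hk : 1 ≤ k) {α γ : KVert Ω k}
    (h : Disjoint α.1 γ.1) : (kneser Ω k).Adj α γ := by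
  refine ⟨fun he => ?_, h⟩
  subst he
  rw [disjoint_self] at h
  have := α.2
  rw [h] at this
  simp at this
  omega

lemma kneser_reachable_swap {Ω : Type*} [Fintype Ω] [DecidableEq Ω] {k : ℕ}
    (hcard : Fintype.card Ω = 2 * k + 1) (hk : 1 ≤ k)
    {α α' : KVert Ω k} {x y : Ω} (hx : x ∈ α.1) (hy : y ∉ α.1)
    (h' : α'.1 = insert y (α.1.erase x)) :
    (kneser Ω k).Reachable α α' := by
  have hcardins : (insert y α.1).card = k + 1 := by
    rw [Finset.card_insert_of_notMem hy, α.2]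
  have hγcard : ((insert y α.1)ᶜ).card = k := by
    rw [Finset.card_compl, hcardins, hcard]; omega
  set γ : KVert Ω k := ⟨(insert y α.1)ᶜ, hγcard⟩ with hγ
  have hd1 : Disjoint α.1 γ.1 := by
    rw [Finset.disjoint_left]
    intro c hc hcγ
    rw [hγ, Finset.mem_compl] at hcγ
    exact hcγ (Finset.mem_insert_of_mem hc)
  have hd2 : Disjoint α'.1 γ.1 := by
    rw [Finset.disjoint_left]
    intro c hc hcγ
    rw [hγ, Finset.mem_compl] at hcγ
    rw [h', Finset.mem_insert] at hc
    rcases hc with rfl | hc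
    · exact hcγ (Finset.mem_insert_self _ _)
    · exact hcγ (Finset.mem_insert_of_mem (Finset.mem_of_mem_erase hc))
  exact ((kneser_adj hk hd1).reachable).trans ((kneser_adj hk hd2).symm.reachable)

lemma kneser_reachable_s8 {Ω : Type*} [Fintype Ω] [DecidableEq Ω] {k : ℕ}
    (hcard : Fintype.card Ω = 2 * k + 1) (hk : 1 ≤ k) (α β : KVert Ω k) :
    (kneser Ω k).Reachable α β := by
  generalize hn : (α.1 \ β.1).card = n
  induction n generalizing α with
  | zero =>
    have hsub : α.1 ⊆ β.1 := by
      rw [← Finset.sdiff_eq_empty_iff_subset, ← Finset.card_eq_zero, hn]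
    have : α.1 = β.1 := Finset.eq_of_subset_of_card_le hsub (by rw [α.2, β.2])
    have heq : α = β := Subtype.ext this
    rw [heq]
  | succ n ih =>
    have hne : (α.1 \ β.1).Nonempty := by
      rw [← Finset.card_pos, hn]; omega
    obtain ⟨x, hxmem⟩ := hne
    have hxα : x ∈ α.1 := (Finset.mem_sdiff.mp hxmem).1
    have hxβ : x ∉ β.1 := (Finset.mem_sdiff.mp hxmem).2
    have hne' : (β.1 \ α.1).Nonempty := by
      rw [← Finset.card_pos, Finset.card_sdiff_comm (by rw [α.2, β.2]), hn]; omega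
    obtain ⟨y, hymem⟩ := hne'
    have hyβ : y ∈ β.1 := (Finset.mem_sdiff.mp hymem).1
    have hyα : y ∉ α.1 := (Finset.mem_sdiff.mp hymem).2
    have hscard : (insert y (α.1.erase x)).card = k := by
      rw [Finset.card_insert_of_notMem (fun h => hyα (Finset.mem_of_mem_erase h)),
        Finset.card_erase_of_mem hxα, α.2]
      omega
    set α₁ : KVert Ω k := ⟨insert y (α.1.erase x), hscard⟩ with hα₁
    have hstep : (kneser Ω k).Reachable α α₁ :=
      kneser_reachable_swap hcard hk hxα hyα rfl
    have hsd : α₁.1 \ β.1 = (α.1 \ β.1).erase x := by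
      ext c
      simp only [hα₁, Finset.mem_sdiff, Finset.mem_insert, Finset.mem_erase]
      constructor
      · rintro ⟨rfl | ⟨hcx, hcα⟩, hcβ⟩
        · exact absurd hyβ hcβ
        · exact ⟨hcx, hcα, hcβ⟩
      · rintro ⟨hcx, hcα, hcβ⟩
        exact ⟨Or.inr ⟨hcx, hcα⟩, hcβ⟩
    have hcard' : (α₁.1 \ β.1).card = n := by
      rw [hsd, Finset.card_erase_of_mem hxmem, hn]
      omega
    exact hstep.trans (ih α₁ hcard')

lemma iota_inv {Ω : Type*} [Fintype Ω] [DecidableEq Ω] {k a b : ℕ}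
    (hb : 1 ≤ b) (B : Fin a → Finset Ω) (hBcard : ∀ i, (B i).card = b)
    (hBdisj : ∀ i j, i ≠ j → Disjoint (B i) (B j))
    (g : Equiv.Perm Ω) (hg : ∀ i, ∃ j, (B i).map g.toEmbedding = B j)
    (γ : KVert Ω k) :
    (Finset.univ.val.map fun i => ((permV g γ).1 ∩ B i).card) =
      Finset.univ.val.map fun i => (γ.1 ∩ B i).card := by
  choose σ hσ using hg
  have hinj : Function.Injective σ := by
    intro i i' h
    by_contra hne
    have hmapeq : (B i).map g.toEmbedding = (B i').map g.toEmbedding := by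
      rw [hσ, hσ, h]
    have hBeq : B i = B i' := Finset.map_injective _ hmapeq
    have hdis := hBdisj i i' hne
    rw [hBeq, disjoint_self] at hdis
    have := hBcard i'
    rw [hdis] at this
    simp at this
    omega
  have hbij : Function.Bijective σ := Finite.injective_iff_bijective.mp hinj
  let e : Fin a ≃ Fin a := Equiv.ofBijective σ hbij
  have huniv : Finset.univ.val = Finset.univ.val.map σ := by
    conv_lhs => rw [← Finset.map_univ_equiv e]
    rfl
  have hcomp : ∀ i, ((permV g γ).1 ∩ B (σ i)).card = (γ.1 ∩ B i).card := by
    intro i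
    show ((γ.1.map g.toEmbedding) ∩ B (σ i)).card = _
    rw [← hσ, ← Finset.map_inter, Finset.card_map]
  conv_lhs => rw [huniv]
  rw [Multiset.map_map]
  exact Multiset.map_congr rfl (fun i _ => hcomp i)

/-- imprimitive case, minimum distance at least 2: every codeword meets
each block of the invariant partition either fully or in a constant number `b₁` of
points, with constant multiplicities `a₀`, `a₁`. -/
theorem stmt8 {Ω : Type*} [Fintype Ω] [DecidableEq Ω] {k a b : ℕ}
    (hcard : Fintype.card Ω = 2 * k + 1)
    (ha : 2 ≤ a) (hb : 2 ≤ b) (hab : a * b = 2 * k + 1)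
    (B : Fin a → Finset Ω) (hBcard : ∀ i, (B i).card = b)
    (hBdisj : ∀ i j, i ≠ j → Disjoint (B i) (B j))
    (hBcover : Finset.univ.biUnion B = Finset.univ)
    (C : Set (KVert Ω k)) (hC : C.Nontrivial)
    (h0 : transOn (autC C) C) (h1 : transOn (autC C) (nbrs C 1))
    (hdelta : ∀ α ∈ C, ∀ β ∈ C, ¬ (kneser Ω k).Adj α β)
    (hpres : ∀ g ∈ autC C, ∀ i, ∃ j, (B i).map g.toEmbedding = B j)
    (hblocktrans : ∀ i j, ∃ g ∈ autC C, (B i).map g.toEmbedding = B j) :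
    ∃ a₀ a₁ b₁ : ℕ, ∀ α ∈ C,
      (Finset.univ.val.map fun i => (α.1 ∩ B i).card) =
        Multiset.replicate a₀ b + Multiset.replicate a₁ b₁ := by
  have hk : 2 ≤ k := by
    have h4 : 4 ≤ a * b := Nat.mul_le_mul ha hb
    omega
  obtain ⟨α₀, hα₀, β₀, hβ₀, hneq⟩ := hC
  set m : Fin a → ℕ := fun i => (α₀.1 ∩ B i).card with hm
  have hblockex : ∀ x : Ω, ∃ i, x ∈ B i := by
    intro x
    have hx : x ∈ Finset.univ.biUnion B := by rw [hBcover]; exact Finset.mem_univ x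
    simpa using Finset.mem_biUnion.mp hx
  have huniqB : ∀ (x : Ω) (i j : Fin a), x ∈ B i → x ∈ B j → i = j := by
    intro x i j hi hj
    by_contra hne
    exact (Finset.disjoint_left.mp (hBdisj i j hne)) hi hj
  have hiotaC : ∀ α ∈ C,
      (Finset.univ.val.map fun i => (α.1 ∩ B i).card) = Finset.univ.val.map m := by
    intro α hα
    obtain ⟨g, hg, hgα⟩ := h0 α₀ hα₀ α hα
    rw [← hgα]
    exact iota_inv (by omega) B hBcard hBdisj g (hpres g hg) α₀
  have hmle : ∀ i, m i ≤ b := by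
    intro i
    calc (α₀.1 ∩ B i).card ≤ (B i).card := Finset.card_le_card Finset.inter_subset_right
    _ = b := hBcard i
  have hmi : ∀ i, (B i ∩ α₀.1).card = m i := fun i => by rw [hm, Finset.inter_comm]
  have hcompl : ∀ i, (α₀.1ᶜ ∩ B i).card = b - m i := by
    intro i
    have h1' : α₀.1ᶜ ∩ B i = B i \ α₀.1 := by
      ext c; simp only [Finset.mem_inter, Finset.mem_compl, Finset.mem_sdiff]; tauto
    have h2 := Finset.card_inter_add_card_sdiff (B i) α₀.1
    rw [hBcard i, hmi i] at h2
    rw [h1']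
    omega
  have hacompl : (α₀.1ᶜ).card = k + 1 := by
    rw [Finset.card_compl, α₀.2, hcard]; omega
  have hnbr : ∀ (x : Ω), x ∉ α₀.1 → ∀ (γv : KVert Ω k), γv.1 = α₀.1ᶜ.erase x →
      γv ∈ nbrs C 1 := by
    intro x hx γv hγv
    have hdisj : Disjoint α₀.1 γv.1 := by
      rw [hγv, Finset.disjoint_left]
      intro c hc hcmem
      exact (Finset.mem_compl.mp (Finset.mem_of_mem_erase hcmem)) hc
    have hadj : (kneser Ω k).Adj α₀ γv := kneser_adj (by omega) hdisj
    constructor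
    · exact ⟨α₀, hα₀, (SimpleGraph.dist_eq_one_iff_adj).mpr hadj⟩
    · intro β hβ
      have hneβ : β ≠ γv := by
        intro h
        exact hdelta α₀ hα₀ β hβ (h ▸ hadj)
      have hreach : (kneser Ω k).Reachable β γv := kneser_reachable_s8 hcard (by omega) β γv
      exact hreach.pos_dist_of_ne hneβ
  have hcompγ : ∀ (z : Ω) (iz : Fin a), z ∉ α₀.1 → z ∈ B iz →
      ∀ (γv : KVert Ω k), γv.1 = α₀.1ᶜ.erase z →
      ∀ l, (γv.1 ∩ B l).card = if l = iz then b - m l - 1 else b - m l := by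
    intro z iz hzα hzB γv hγv l
    rw [hγv, Finset.erase_inter]
    by_cases hl : l = iz
    · subst hl
      rw [if_pos rfl,
        Finset.card_erase_of_mem (Finset.mem_inter.mpr ⟨Finset.mem_compl.mpr hzα, hzB⟩),
        hcompl]
    · rw [if_neg hl,
        Finset.erase_eq_of_notMem
          (fun hmem => hl (huniqB z l iz (Finset.mem_inter.mp hmem).2 hzB)),
        hcompl]
  have hbase : ∀ iz : Fin a, (Finset.univ.val.map fun l => b - m l) =
      (b - m iz) ::ₘ ((Finset.univ.val.erase iz).map fun l => b - m l) := by
    intro iz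
    conv_lhs => rw [← Multiset.cons_erase (show iz ∈ Finset.univ.val from Finset.mem_univ iz)]
    rw [Multiset.map_cons]
  have hmod : ∀ iz : Fin a,
      (Finset.univ.val.map fun l => (if l = iz then b - m l - 1 else b - m l)) =
      (b - m iz - 1) ::ₘ ((Finset.univ.val.erase iz).map fun l => b - m l) := by
    intro iz
    conv_lhs => rw [← Multiset.cons_erase (show iz ∈ Finset.univ.val from Finset.mem_univ iz)]
    rw [Multiset.map_cons, if_pos rfl]
    congr 1
    apply Multiset.map_congr rfl
    intro l hl
    have hlne : l ≠ iz :=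
      ((Multiset.Nodup.mem_erase_iff Finset.univ.nodup).mp hl).1
    rw [if_neg hlne]
  have hclaim : ∀ i j, m i < b → m j < b → m i = m j := by
    intro i j hi hj
    have hxex : (B i \ α₀.1).Nonempty := by
      rw [← Finset.card_pos]
      have h2 := Finset.card_inter_add_card_sdiff (B i) α₀.1
      rw [hBcard i, hmi i] at h2
      omega
    obtain ⟨x, hxmem⟩ := hxex
    have hxB : x ∈ B i := (Finset.mem_sdiff.mp hxmem).1
    have hxα : x ∉ α₀.1 := (Finset.mem_sdiff.mp hxmem).2
    have hyex : (B j \ α₀.1).Nonempty := by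
      rw [← Finset.card_pos]
      have h2 := Finset.card_inter_add_card_sdiff (B j) α₀.1
      rw [hBcard j, hmi j] at h2
      omega
    obtain ⟨y, hymem⟩ := hyex
    have hyB : y ∈ B j := (Finset.mem_sdiff.mp hymem).1
    have hyα : y ∉ α₀.1 := (Finset.mem_sdiff.mp hymem).2
    set γx : KVert Ω k := ⟨α₀.1ᶜ.erase x,
      by rw [Finset.card_erase_of_mem (Finset.mem_compl.mpr hxα), hacompl]; omega⟩ with hγxdef
    set γy : KVert Ω k := ⟨α₀.1ᶜ.erase y,
      by rw [Finset.card_erase_of_mem (Finset.mem_compl.mpr hyα), hacompl]; omega⟩ with hγydef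
    have hγxm := hnbr x hxα γx rfl
    have hγym := hnbr y hyα γy rfl
    obtain ⟨g, hg, hgγ⟩ := h1 γx hγxm γy hγym
    have hiota : (Finset.univ.val.map fun l => (γy.1 ∩ B l).card) =
        Finset.univ.val.map fun l => (γx.1 ∩ B l).card := by
      rw [← hgγ]
      exact iota_inv (by omega) B hBcard hBdisj g (hpres g hg) γx
    have hx1 : (Finset.univ.val.map fun l => (γx.1 ∩ B l).card) =
        (b - m i - 1) ::ₘ ((Finset.univ.val.erase i).map fun l => b - m l) := by
      rw [← hmod i]
      exact Multiset.map_congr rfl (fun l _ => hcompγ x i hxα hxB γx rfl l)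
    have hy1 : (Finset.univ.val.map fun l => (γy.1 ∩ B l).card) =
        (b - m j - 1) ::ₘ ((Finset.univ.val.erase j).map fun l => b - m l) := by
      rw [← hmod j]
      exact Multiset.map_congr rfl (fun l _ => hcompγ y j hyα hyB γy rfl l)
    have hkey : b - m i = b - m j := by
      exact key_count (T₁ := (Finset.univ.val.erase i).map fun l => b - m l)
        (T₂ := (Finset.univ.val.erase j).map fun l => b - m l)
        (u := b - m i) (v := b - m j) (by omega) (by omega)
        ((hbase i).symm.trans (hbase j)) (hx1.symm.trans (hiota.symm.trans hy1))
    omega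
  have hsum : ∑ i, m i = k := by
    have hbi : α₀.1 = Finset.univ.biUnion (fun i => α₀.1 ∩ B i) := by
      ext c
      simp only [Finset.mem_biUnion, Finset.mem_inter, Finset.mem_univ, true_and]
      constructor
      · intro hc
        obtain ⟨i, hi⟩ := hblockex c
        exact ⟨i, hc, hi⟩
      · rintro ⟨i, hc, _⟩; exact hc
    have hdisj' : ∀ i ∈ Finset.univ, ∀ j ∈ Finset.univ, i ≠ j →
        Disjoint (α₀.1 ∩ B i) (α₀.1 ∩ B j) := by
      intro i _ j _ hij
      exact (hBdisj i j hij).mono Finset.inter_subset_right Finset.inter_subset_right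
    calc ∑ i, m i = (Finset.univ.biUnion (fun i => α₀.1 ∩ B i)).card :=
          (Finset.card_biUnion hdisj').symm
    _ = α₀.1.card := by rw [← hbi]
    _ = k := α₀.2
  have hex : ∃ i₀, m i₀ < b := by
    by_contra h
    push_neg at h
    have hall : ∀ i, m i = b := fun i => le_antisymm (hmle i) (h i)
    have hs : ∑ i, m i = a * b := by
      rw [Finset.sum_congr rfl (fun i _ => hall i), Finset.sum_const, Finset.card_univ,
        Fintype.card_fin, smul_eq_mul]
    omega
  obtain ⟨i₀, hi₀⟩ := hex
  refine ⟨(Finset.univ.filter (fun i => m i = b)).card,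
    (Finset.univ.filter (fun i => ¬ m i = b)).card, m i₀, ?_⟩
  intro α hα
  rw [hiotaC α hα]
  have hsplit : (Finset.univ.val : Multiset (Fin a)) =
      Finset.univ.val.filter (fun i => m i = b) +
        Finset.univ.val.filter (fun i => ¬ m i = b) :=
    (Multiset.filter_add_not _ _).symm
  conv_lhs => rw [hsplit]
  rw [Multiset.map_add]
  congr 1
  · rw [Multiset.eq_replicate]
    refine ⟨by rw [Multiset.card_map]; rfl, ?_⟩
    intro c hc
    obtain ⟨l, hl, rfl⟩ := Multiset.mem_map.mp hc
    exact (Multiset.mem_filter.mp hl).2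
  · rw [Multiset.eq_replicate]
    refine ⟨by rw [Multiset.card_map]; rfl, ?_⟩
    intro c hc
    obtain ⟨l, hl, rfl⟩ := Multiset.mem_map.mp hc
    have hlb : ¬ m l = b := (Multiset.mem_filter.mp hl).2
    exact hclaim l i₀ (lt_of_le_of_ne (hmle l) hlb) hi₀
end

section
/- Let Ω be a (2k+1)-set partitioned into a blocks of size b (ab = 2k+1, a,b ≥ 2), and let C be the set of all k-subsets α of Ω whose multiset of block intersection sizes equals M, where M is one of: (1) {(b−1)/2 with multiplicity (a+1)/2, (b+1)/2 with multiplicity (a−1)/2}; (2) {0 with multiplicity (a−1)/2, (b−1)/2 once, b with multiplicity (a−1)/2}; (3) {b with multiplicity a₀, b₁ with multiplicity a₁} for integers a₀, a₁, b₁ ≥ 0 with a₀b + a₁b₁ = k and (a₀+a₁)b = 2k+1. Then the full stabiliser G ≅ S_b ≀ S_a of the partition in Sym(Ω) is contained in Aut(C) and acts transitively on C and on C₁, i.e. C is G-neighbour-transitive in O_{k+1}. -/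
open Finset

lemma exists_block_fn {Ω : Type*} [Fintype Ω] [DecidableEq Ω] {a : ℕ}
    (B : Fin a → Finset Ω)
    (hBdisj : ∀ i j, i ≠ j → Disjoint (B i) (B j))
    (hBcover : Finset.univ.biUnion B = Finset.univ) :
    ∃ c : Ω → Fin a, ∀ x i, x ∈ B i ↔ c x = i := by
  have hcov : ∀ x : Ω, ∃ i, x ∈ B i := by
    intro x
    have hx : x ∈ Finset.univ.biUnion B := by rw [hBcover]; exact Finset.mem_univ x
    simpa using hx
  choose c hc using hcov
  refine ⟨c, fun x i => ⟨fun hx => ?_, fun h => h ▸ hc x⟩⟩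
  by_contra hne
  exact (Finset.disjoint_left.mp (hBdisj (c x) i hne) (hc x)) hx

lemma equiv_of_filter_card_eq {ι κ γ : Type*} [Fintype ι] [Fintype κ]
    [DecidableEq ι] [DecidableEq κ] [DecidableEq γ]
    (f : ι → γ) (g : κ → γ)
    (h : ∀ n, (Finset.univ.filter fun i => f i = n).card
        = (Finset.univ.filter fun j => g j = n).card) :
    ∃ e : ι ≃ κ, ∀ i, g (e i) = f i := by
  have e : ∀ n, { i // f i = n } ≃ { j // g j = n } := fun n =>
    Fintype.equivOfCardEq (by rw [Fintype.card_subtype, Fintype.card_subtype, h])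
  exact ⟨Equiv.ofFiberEquiv e, fun i => Equiv.ofFiberEquiv_map e i⟩

lemma filter_card_of_map_eq {ι κ : Type*} [Fintype ι] [Fintype κ] [DecidableEq ι] [DecidableEq κ]
    (f : ι → ℕ) (g : κ → ℕ)
    (h : Finset.univ.val.map f = Finset.univ.val.map g) (n : ℕ) :
    (Finset.univ.filter fun i => f i = n).card = (Finset.univ.filter fun j => g j = n).card := by
  have h1 := congrArg (Multiset.count n) h
  rw [Multiset.count_map, Multiset.count_map] at h1
  have e1 : Multiset.filter (fun a => n = f a) Finset.univ.val
      = Multiset.filter (fun a => f a = n) Finset.univ.val :=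
    Multiset.filter_congr (fun x _ => eq_comm)
  have e2 : Multiset.filter (fun a => n = g a) Finset.univ.val
      = Multiset.filter (fun a => g a = n) Finset.univ.val :=
    Multiset.filter_congr (fun x _ => eq_comm)
  rw [e1, e2] at h1
  simpa [Finset.card, Finset.filter_val] using h1

lemma exists_perm_of_type_eq {Ω : Type*} [Fintype Ω] [DecidableEq Ω] {a : ℕ} (b : ℕ)
    (B : Fin a → Finset Ω) (hBcard : ∀ i, (B i).card = b)
    (hBdisj : ∀ i j, i ≠ j → Disjoint (B i) (B j))
    (hBcover : Finset.univ.biUnion B = Finset.univ)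
    (α β : Finset Ω)
    (h : Finset.univ.val.map (fun i => (α ∩ B i).card)
        = Finset.univ.val.map (fun i => (β ∩ B i).card)) :
    ∃ g : Equiv.Perm Ω, (∀ i, ∃ j, (B i).map g.toEmbedding = B j)
        ∧ α.map g.toEmbedding = β := by
  classical
  obtain ⟨c, hc⟩ := exists_block_fn B hBdisj hBcover
  obtain ⟨σ, hσ⟩ := equiv_of_filter_card_eq (fun i => (α ∩ B i).card)
    (fun i => (β ∩ B i).card) (fun n => filter_card_of_map_eq _ _ h n)
  set F₁ : Ω → Fin a × Bool := fun x => (σ (c x), decide (x ∈ α)) with hF₁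
  set F₂ : Ω → Fin a × Bool := fun x => (c x, decide (x ∈ β)) with hF₂
  have hfa : ∀ j : Fin a, (Finset.univ.filter fun x => F₁ x = (j, true)) = α ∩ B (σ.symm j) := by
    intro j
    ext x
    simp only [Finset.mem_filter, Finset.mem_univ, true_and, Finset.mem_inter, hF₁,
      Prod.mk.injEq, decide_eq_true_eq, hc x (σ.symm j), Equiv.apply_eq_iff_eq_symm_apply]
    tauto
  have hfa' : ∀ j : Fin a, (Finset.univ.filter fun x => F₁ x = (j, false)) = B (σ.symm j) \ α := by
    intro j
    ext x
    simp only [Finset.mem_filter, Finset.mem_univ, true_and, Finset.mem_sdiff, hF₁,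
      Prod.mk.injEq, decide_eq_false_iff_not, hc x (σ.symm j), Equiv.apply_eq_iff_eq_symm_apply]
  have hfb : ∀ j : Fin a, (Finset.univ.filter fun x => F₂ x = (j, true)) = β ∩ B j := by
    intro j
    ext x
    simp only [Finset.mem_filter, Finset.mem_univ, true_and, Finset.mem_inter, hF₂,
      Prod.mk.injEq, decide_eq_true_eq, hc x j]
    tauto
  have hfb' : ∀ j : Fin a, (Finset.univ.filter fun x => F₂ x = (j, false)) = B j \ β := by
    intro j
    ext x
    simp only [Finset.mem_filter, Finset.mem_univ, true_and, Finset.mem_sdiff, hF₂,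
      Prod.mk.injEq, decide_eq_false_iff_not, hc x j]
  have hcards : ∀ j : Fin a, (β ∩ B j).card = (α ∩ B (σ.symm j)).card := by
    intro j
    have := hσ (σ.symm j)
    simpa using this
  have hmain : ∀ p : Fin a × Bool,
      (Finset.univ.filter fun x => F₁ x = p).card = (Finset.univ.filter fun x => F₂ x = p).card := by
    rintro ⟨j, bb⟩
    cases bb
    · rw [hfa' j, hfb' j]
      have h1 := Finset.card_inter_add_card_sdiff (B (σ.symm j)) α
      have h2 := Finset.card_inter_add_card_sdiff (B j) β
      rw [hBcard] at h1 h2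
      have h3 : (β ∩ B j).card = (B j ∩ β).card := by rw [Finset.inter_comm]
      have h4 : (α ∩ B (σ.symm j)).card = (B (σ.symm j) ∩ α).card := by rw [Finset.inter_comm]
      have h5 := hcards j
      omega
    · rw [hfa j, hfb j]
      exact (hcards j).symm
  obtain ⟨g, hg⟩ := equiv_of_filter_card_eq F₁ F₂ hmain
  have hgb : ∀ x : Ω, c (g x) = σ (c x) ∧ (g x ∈ β ↔ x ∈ α) := by
    intro x
    have h1 := congrArg Prod.fst (hg x)
    have h2 := congrArg Prod.snd (hg x)
    simp only [hF₁, hF₂] at h1 h2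
    exact ⟨h1, by simpa [decide_eq_decide] using h2⟩
  refine ⟨g, fun i => ⟨σ i, ?_⟩, ?_⟩
  · ext y
    simp only [Finset.mem_map, Equiv.coe_toEmbedding]
    constructor
    · rintro ⟨x, hx, rfl⟩
      rw [hc]
      rw [(hgb x).1, (hc x i).mp hx]
    · intro hy
      refine ⟨g.symm y, ?_, by simp⟩
      have h1 := (hgb (g.symm y)).1
      rw [g.apply_symm_apply] at h1
      have h2 : c y = σ i := (hc y (σ i)).mp hy
      rw [hc]
      exact σ.injective (h1.symm.trans h2)
  · ext y
    simp only [Finset.mem_map, Equiv.coe_toEmbedding]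
    constructor
    · rintro ⟨x, hx, rfl⟩
      exact (hgb x).2.mpr hx
    · intro hy
      refine ⟨g.symm y, ?_, by simp⟩
      have h2 := (hgb (g.symm y)).2
      rw [g.apply_symm_apply] at h2
      exact h2.mp hy


lemma blocks_fn_bij {Ω : Type*} [Fintype Ω] [DecidableEq Ω] {a b : ℕ} (hb : 0 < b)
    (B : Fin a → Finset Ω) (hBcard : ∀ i, (B i).card = b)
    (hBdisj : ∀ i j, i ≠ j → Disjoint (B i) (B j))
    (g : Equiv.Perm Ω) (hg : ∀ i, ∃ j, (B i).map g.toEmbedding = B j) :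
    ∃ f : Fin a → Fin a, Function.Bijective f ∧ ∀ i, (B i).map g.toEmbedding = B (f i) := by
  choose f hf using hg
  have hinj : Function.Injective f := by
    intro i j hij
    by_contra hne
    have h1 : B i = B j := Finset.map_injective g.toEmbedding (by rw [hf i, hf j, hij])
    have h2 : (B i).Nonempty := Finset.card_pos.mp (by rw [hBcard]; exact hb)
    obtain ⟨x, hx⟩ := h2
    exact (Finset.disjoint_left.mp (hBdisj i j hne) hx) (h1 ▸ hx)
  exact ⟨f, Finite.injective_iff_bijective.mp hinj, hf⟩

lemma type_map_eq {Ω : Type*} [Fintype Ω] [DecidableEq Ω] {a b : ℕ} (hb : 0 < b)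
    (B : Fin a → Finset Ω) (hBcard : ∀ i, (B i).card = b)
    (hBdisj : ∀ i j, i ≠ j → Disjoint (B i) (B j))
    (g : Equiv.Perm Ω) (hg : ∀ i, ∃ j, (B i).map g.toEmbedding = B j) (α : Finset Ω) :
    Finset.univ.val.map (fun i => ((α.map g.toEmbedding) ∩ B i).card)
      = Finset.univ.val.map (fun i => (α ∩ B i).card) := by
  classical
  obtain ⟨f, hbij, hf⟩ := blocks_fn_bij hb B hBcard hBdisj g hg
  set e := Equiv.ofBijective f hbij with he
  have huniv : (Finset.univ.val.map (fun i => ((α.map g.toEmbedding) ∩ B i).card))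
      = Finset.univ.val.map (fun i => ((α.map g.toEmbedding) ∩ B (f i)).card) := by
    conv_lhs => rw [← Finset.map_univ_equiv e]
    rw [Finset.map_val, Multiset.map_map]
    rfl
  rw [huniv]
  apply Multiset.map_congr rfl
  intro i _
  rw [← hf i, ← Finset.map_inter, Finset.card_map]

lemma inv_blocks {Ω : Type*} [Fintype Ω] [DecidableEq Ω] {a b : ℕ} (hb : 0 < b)
    (B : Fin a → Finset Ω) (hBcard : ∀ i, (B i).card = b)
    (hBdisj : ∀ i j, i ≠ j → Disjoint (B i) (B j))
    (g : Equiv.Perm Ω) (hg : ∀ i, ∃ j, (B i).map g.toEmbedding = B j) :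
    ∀ i, ∃ j, (B i).map g.symm.toEmbedding = B j := by
  obtain ⟨f, hbij, hf⟩ := blocks_fn_bij hb B hBcard hBdisj g hg
  intro i
  obtain ⟨j, hj⟩ := hbij.2 i
  refine ⟨j, ?_⟩
  rw [← hj, ← hf j]
  ext y
  simp [Finset.mem_map]

lemma neighbour_type {Ω : Type*} [Fintype Ω] [DecidableEq Ω] {k a : ℕ} (b : ℕ)
    (hcard : Fintype.card Ω = 2 * k + 1)
    (B : Fin a → Finset Ω) (hBcard : ∀ i, (B i).card = b)
    (hBdisj : ∀ i j, i ≠ j → Disjoint (B i) (B j))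
    (hBcover : Finset.univ.biUnion B = Finset.univ)
    (α x : Finset Ω) (hαc : α.card = k) (hxc : x.card = k) (hd : Disjoint α x) :
    ∃ v, 1 ≤ v ∧ v ::ₘ Finset.univ.val.map (fun i => (x ∩ B i).card)
      = (v - 1) ::ₘ (Finset.univ.val.map (fun i => (α ∩ B i).card)).map (fun n => b - n) := by
  classical
  obtain ⟨c, hc⟩ := exists_block_fn B hBdisj hBcover
  set compl := Finset.univ \ α with hcompl
  have hcc : compl.card = k + 1 := by
    rw [hcompl, Finset.card_sdiff_of_subset (Finset.subset_univ α), Finset.card_univ, hcard, hαc]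
    omega
  have hxsub : x ⊆ compl := by
    intro y hy
    simp only [hcompl, Finset.mem_sdiff, Finset.mem_univ, true_and]
    exact Finset.disjoint_right.mp hd hy
  have hds : (compl \ x).card = 1 := by
    rw [Finset.card_sdiff_of_subset hxsub, hcc, hxc]; omega
  obtain ⟨pt, hpt⟩ := Finset.card_eq_one.mp hds
  have hptc : pt ∈ compl ∧ pt ∉ x := by
    have h0 : pt ∈ compl \ x := by rw [hpt]; exact Finset.mem_singleton_self pt
    simpa [Finset.mem_sdiff] using h0
  have hxeq : x = compl.erase pt := by
    ext y
    simp only [Finset.mem_erase]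
    constructor
    · intro hy
      exact ⟨fun hcon => hptc.2 (hcon ▸ hy), hxsub hy⟩
    · rintro ⟨hne, hyc⟩
      by_contra hyx
      have h0 : y ∈ compl \ x := Finset.mem_sdiff.mpr ⟨hyc, hyx⟩
      rw [hpt, Finset.mem_singleton] at h0
      exact hne h0
  have hcompl_inter : ∀ i, (compl ∩ B i).card = b - (α ∩ B i).card := by
    intro i
    have h1 : compl ∩ B i = B i \ α := by
      ext y
      simp only [hcompl, Finset.mem_inter, Finset.mem_sdiff, Finset.mem_univ, true_and]
      tauto
    have h2 := Finset.card_inter_add_card_sdiff (B i) α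
    rw [hBcard i] at h2
    have h4 : (α ∩ B i).card = (B i ∩ α).card := by rw [Finset.inter_comm]
    rw [h1]
    omega
  set i₀ := c pt with hi₀
  have hpti : pt ∈ B i₀ := (hc pt i₀).mpr rfl
  set m : Fin a → ℕ := fun i => (α ∩ B i).card with hm
  set v := b - m i₀ with hv
  have hv1 : 1 ≤ v := by
    have h5 : pt ∈ compl ∩ B i₀ := Finset.mem_inter.mpr ⟨hptc.1, hpti⟩
    have h6 := hcompl_inter i₀
    have h7 : 0 < (compl ∩ B i₀).card := Finset.card_pos.mpr ⟨pt, h5⟩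
    have h8 : m i₀ = (α ∩ B i₀).card := rfl
    omega
  have htx : ∀ i, (x ∩ B i).card = if i = i₀ then v - 1 else b - m i := by
    intro i
    have h8 : x ∩ B i = (compl ∩ B i).erase pt := by
      rw [hxeq]
      ext z
      simp only [Finset.mem_inter, Finset.mem_erase]
      tauto
    by_cases hii : i = i₀
    · subst hii
      rw [h8, Finset.card_erase_of_mem (Finset.mem_inter.mpr ⟨hptc.1, hpti⟩), hcompl_inter i₀,
        if_pos rfl]
    · have h9 : pt ∉ compl ∩ B i := by
        intro hcon
        have h10 : c pt = i := (hc pt i).mp (Finset.mem_inter.mp hcon).2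
        exact hii (by rw [hi₀]; exact h10.symm)
      rw [h8, Finset.erase_eq_of_notMem h9, hcompl_inter i, if_neg hii]
  refine ⟨v, hv1, ?_⟩
  have hmm : (Finset.univ.val.map (fun i => (α ∩ B i).card)).map (fun n => b - n)
      = Finset.univ.val.map (fun i => b - m i) := by
    rw [Multiset.map_map]; rfl
  rw [hmm]
  have hu : (Finset.univ : Finset (Fin a)).val = i₀ ::ₘ (Finset.univ.erase i₀).val := by
    rw [Finset.erase_val]
    exact (Multiset.cons_erase (Finset.mem_univ_val i₀)).symm
  rw [hu, Multiset.map_cons, Multiset.map_cons]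
  have hrest : Multiset.map (fun i => (x ∩ B i).card) (Finset.univ.erase i₀).val
      = Multiset.map (fun i => b - m i) (Finset.univ.erase i₀).val := by
    apply Multiset.map_congr rfl
    intro i hi
    have hne : i ≠ i₀ := (Finset.mem_erase.mp (Finset.mem_val.mp hi)).1
    rw [htx i, if_neg hne]
  rw [hrest, htx i₀, if_pos rfl, ← hv]
  exact Multiset.cons_swap _ _ _


lemma eq_of_cons_eq_cons {X N T : Multiset ℕ} {v w : ℕ}
    (h : v ::ₘ X = w ::ₘ T)
    (hN : ∀ n, Multiset.count n N + (if n = v then 1 else 0)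
        = Multiset.count n T + (if n = w then 1 else 0)) :
    X = N := by
  rw [Multiset.ext]
  intro n
  have h1 := congrArg (Multiset.count n) h
  rw [Multiset.count_cons, Multiset.count_cons] at h1
  have h2 := hN n
  split_ifs at h1 h2 <;> omega

lemma multiset_unique {k a b : ℕ} (ha : 2 ≤ a) (hb : 2 ≤ b) (hab : a * b = 2 * k + 1)
    (M : Multiset ℕ)
    (hM : M = Multiset.replicate ((a + 1) / 2) ((b - 1) / 2) +
            Multiset.replicate ((a - 1) / 2) ((b + 1) / 2) ∨
          M = Multiset.replicate ((a - 1) / 2) 0 + {(b - 1) / 2} +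
            Multiset.replicate ((a - 1) / 2) b ∨
          ∃ a₀ a₁ b₁ : ℕ, a₀ * b + a₁ * b₁ = k ∧ (a₀ + a₁) * b = 2 * k + 1 ∧
            M = Multiset.replicate a₀ b + Multiset.replicate a₁ b₁)
    {X Y : Multiset ℕ} {v w : ℕ} (hv : 1 ≤ v) (hw : 1 ≤ w)
    (hX : v ::ₘ X = (v - 1) ::ₘ M.map (fun n => b - n))
    (hY : w ::ₘ Y = (w - 1) ::ₘ M.map (fun n => b - n))
    (hXM : X ≠ M) (hYM : Y ≠ M) : X = Y := by
  -- a and b are odd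
  have hmod := Nat.mul_mod a b 2
  rw [hab] at hmod
  have hodd : a % 2 = 1 ∧ b % 2 = 1 := by
    rcases Nat.mod_two_eq_zero_or_one a with h | h <;>
      rcases Nat.mod_two_eq_zero_or_one b with h' | h' <;> rw [h, h'] at hmod <;> omega
  obtain ⟨q, hq, haq⟩ : ∃ q, 1 ≤ q ∧ a = 2 * q + 1 := ⟨(a - 1) / 2, by omega, by omega⟩
  obtain ⟨s, hs, hbs⟩ : ∃ s, 1 ≤ s ∧ b = 2 * s + 1 := ⟨(b - 1) / 2, by omega, by omega⟩
  rcases hM with hM | hM | ⟨a₀, a₁, b₁, h1, h2, hM⟩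
  · -- Case 1
    have e1 : (a + 1) / 2 = q + 1 := by omega
    have e2 : (b - 1) / 2 = s := by omega
    have e3 : (a - 1) / 2 = q := by omega
    have e4 : (b + 1) / 2 = s + 1 := by omega
    rw [e1, e2, e3, e4] at hM
    have hT : M.map (fun n => b - n) =
        Multiset.replicate (q + 1) (s + 1) + Multiset.replicate q s := by
      rw [hM, Multiset.map_add, Multiset.map_replicate, Multiset.map_replicate]
      have f1 : b - s = s + 1 := by omega
      have f2 : b - (s + 1) = s := by omega
      rw [f1, f2]
    have claim : ∀ (Z : Multiset ℕ) (u : ℕ), 1 ≤ u →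
        u ::ₘ Z = (u - 1) ::ₘ M.map (fun n => b - n) → Z ≠ M →
        Z = (s - 1) ::ₘ (Multiset.replicate (q + 1) (s + 1) + Multiset.replicate (q - 1) s) := by
      intro Z u hu hZ hZM
      rw [hT] at hZ
      have hmem : u ∈ ((u - 1) ::ₘ (Multiset.replicate (q + 1) (s + 1) +
          Multiset.replicate q s)) := by
        rw [← hZ]; exact Multiset.mem_cons_self u _
      have hu' : u = s + 1 ∨ u = s := by
        rcases Multiset.mem_cons.mp hmem with h | h
        · omega
        · simp only [Multiset.mem_add, Multiset.mem_replicate] at h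
          omega
      rcases hu' with h | h
      · exfalso
        apply hZM
        subst h
        refine eq_of_cons_eq_cons hZ ?_
        intro n
        rw [hM]
        simp only [Multiset.count_add, Multiset.count_replicate]
        split_ifs <;> omega
      · subst h
        refine eq_of_cons_eq_cons hZ ?_
        intro n
        simp only [Multiset.count_add, Multiset.count_replicate, Multiset.count_cons]
        split_ifs <;> omega
    rw [claim X v hv hX hXM, claim Y w hw hY hYM]
  · -- Case 2
    have e2 : (b - 1) / 2 = s := by omega
    have e3 : (a - 1) / 2 = q := by omega
    rw [e2, e3] at hM
    have hT : M.map (fun n => b - n) =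
        Multiset.replicate q b + {s + 1} + Multiset.replicate q 0 := by
      rw [hM, Multiset.map_add, Multiset.map_add, Multiset.map_replicate,
        Multiset.map_replicate, Multiset.map_singleton]
      have f1 : b - 0 = b := by omega
      have f2 : b - s = s + 1 := by omega
      have f3 : b - b = 0 := by omega
      rw [f1, f2, f3]
    have claim : ∀ (Z : Multiset ℕ) (u : ℕ), 1 ≤ u →
        u ::ₘ Z = (u - 1) ::ₘ M.map (fun n => b - n) → Z ≠ M →
        Z = (b - 1) ::ₘ (Multiset.replicate (q - 1) b + {s + 1} + Multiset.replicate q 0) := by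
      intro Z u hu hZ hZM
      rw [hT] at hZ
      have hmem : u ∈ ((u - 1) ::ₘ (Multiset.replicate q b + {s + 1} +
          Multiset.replicate q 0)) := by
        rw [← hZ]; exact Multiset.mem_cons_self u _
      have hu' : u = s + 1 ∨ u = b := by
        rcases Multiset.mem_cons.mp hmem with h | h
        · omega
        · simp only [Multiset.mem_add, Multiset.mem_replicate, Multiset.mem_singleton] at h
          omega
      rcases hu' with h | h
      · exfalso
        apply hZM
        subst h
        refine eq_of_cons_eq_cons hZ ?_
        intro n
        rw [hM]
        simp only [Multiset.count_add, Multiset.count_replicate, Multiset.count_singleton]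
        split_ifs <;> omega
      · subst h
        refine eq_of_cons_eq_cons hZ ?_
        intro n
        simp only [Multiset.count_add, Multiset.count_replicate, Multiset.count_singleton,
          Multiset.count_cons]
        split_ifs <;> omega
    rw [claim X v hv hX hXM, claim Y w hw hY hYM]
  · -- Case 3
    have key : a₀ * b + a₁ * b = 2 * k + 1 := by rw [← Nat.add_mul]; exact h2
    have ha₁ : 1 ≤ a₁ := by
      rcases Nat.eq_zero_or_pos a₁ with h0 | h0
      · exfalso
        rw [h0] at h1 key
        simp only [Nat.zero_mul, Nat.add_zero] at h1 key
        rw [h1] at key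
        omega
      · exact h0
    have hb₁ : b₁ < b := by
      by_contra hge
      push_neg at hge
      have h3 : a₁ * b ≤ a₁ * b₁ := Nat.mul_le_mul_left a₁ hge
      have h4 : a₀ * b + a₁ * b ≤ a₀ * b + a₁ * b₁ := Nat.add_le_add_left h3 _
      rw [key, h1] at h4
      omega
    have hT : M.map (fun n => b - n) =
        Multiset.replicate a₀ 0 + Multiset.replicate a₁ (b - b₁) := by
      rw [hM, Multiset.map_add, Multiset.map_replicate, Multiset.map_replicate, Nat.sub_self]
    have claim : ∀ (Z : Multiset ℕ) (u : ℕ), 1 ≤ u →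
        u ::ₘ Z = (u - 1) ::ₘ M.map (fun n => b - n) →
        Z = (b - b₁ - 1) ::ₘ (Multiset.replicate a₀ 0 +
          Multiset.replicate (a₁ - 1) (b - b₁)) := by
      intro Z u hu hZ
      rw [hT] at hZ
      have hmem : u ∈ ((u - 1) ::ₘ (Multiset.replicate a₀ 0 +
          Multiset.replicate a₁ (b - b₁))) := by
        rw [← hZ]; exact Multiset.mem_cons_self u _
      have hu' : u = b - b₁ := by
        rcases Multiset.mem_cons.mp hmem with h | h
        · omega
        · simp only [Multiset.mem_add, Multiset.mem_replicate] at h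
          omega
      subst hu'
      refine eq_of_cons_eq_cons hZ ?_
      intro n
      simp only [Multiset.count_add, Multiset.count_replicate, Multiset.count_cons]
      split_ifs <;> omega
    rw [claim X v hv hX, claim Y w hw hY]

/-- the codes `C_imp(a,b;M)`, for the three listed multisets `M`, are
neighbour-transitive for the full stabiliser `S_b ≀ S_a` of the partition. -/
theorem stmt10 {Ω : Type*} [Fintype Ω] [DecidableEq Ω] {k a b : ℕ}
    (hcard : Fintype.card Ω = 2 * k + 1)
    (ha : 2 ≤ a) (hb : 2 ≤ b) (hab : a * b = 2 * k + 1)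
    (B : Fin a → Finset Ω) (hBcard : ∀ i, (B i).card = b)
    (hBdisj : ∀ i j, i ≠ j → Disjoint (B i) (B j))
    (hBcover : Finset.univ.biUnion B = Finset.univ)
    (M : Multiset ℕ)
    (hM : M = Multiset.replicate ((a + 1) / 2) ((b - 1) / 2) +
            Multiset.replicate ((a - 1) / 2) ((b + 1) / 2) ∨
          M = Multiset.replicate ((a - 1) / 2) 0 + {(b - 1) / 2} +
            Multiset.replicate ((a - 1) / 2) b ∨
          ∃ a₀ a₁ b₁ : ℕ, a₀ * b + a₁ * b₁ = k ∧ (a₀ + a₁) * b = 2 * k + 1 ∧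
            M = Multiset.replicate a₀ b + Multiset.replicate a₁ b₁)
    (C : Set (KVert Ω k))
    (hCdef : C = {α | (Finset.univ.val.map fun i => (α.1 ∩ B i).card) = M})
    (G : Set (Equiv.Perm Ω))
    (hGdef : G = {g | ∀ i, ∃ j, (B i).map g.toEmbedding = B j}) :
    G ⊆ autC C ∧ transOn G C ∧ transOn G (nbrs C 1) := by
  classical
  have hb0 : 0 < b := by omega
  have hCmem : ∀ z : KVert Ω k,
      z ∈ C ↔ (Finset.univ.val.map fun i => (z.1 ∩ B i).card) = M := by
    intro z; rw [hCdef]; exact Iff.rfl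
  have hGmem : ∀ g : Equiv.Perm Ω, g ∈ G ↔ ∀ i, ∃ j, (B i).map g.toEmbedding = B j := by
    intro g; rw [hGdef]; exact Iff.rfl
  refine ⟨?_, ?_, ?_⟩
  · -- G ⊆ autC C
    intro g hg
    have hg' := (hGmem g).mp hg
    have hperm : ∀ z : KVert Ω k, permV g z ∈ C ↔ z ∈ C := by
      intro z
      rw [hCmem, hCmem]
      have ht := type_map_eq hb0 B hBcard hBdisj g hg' z.1
      constructor
      · intro hh; exact ht.symm.trans hh
      · intro hh; exact ht.trans hh
    show (permV g) '' C = C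
    apply Set.Subset.antisymm
    · rintro _ ⟨z, hz, rfl⟩
      exact (hperm z).mpr hz
    · intro z hz
      have hginv : ∀ i, ∃ j, (B i).map g.symm.toEmbedding = B j :=
        inv_blocks hb0 B hBcard hBdisj g hg'
      refine ⟨permV g.symm z, ?_, ?_⟩
      · rw [hCmem]
        have ht := type_map_eq hb0 B hBcard hBdisj g.symm hginv z.1
        exact ht.trans ((hCmem z).mp hz)
      · apply Subtype.ext
        show (z.1.map g.symm.toEmbedding).map g.toEmbedding = z.1
        ext y
        simp only [Finset.mem_map, Equiv.coe_toEmbedding]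
        constructor
        · rintro ⟨x, ⟨w, hw, rfl⟩, rfl⟩
          simpa using hw
        · intro hy
          exact ⟨g.symm y, ⟨y, hy, rfl⟩, by simp⟩
  · intro x hx y hy
    obtain ⟨g, hgB, hgmap⟩ := exists_perm_of_type_eq b B hBcard hBdisj hBcover x.1 y.1
      (((hCmem x).mp hx).trans ((hCmem y).mp hy).symm)
    exact ⟨g, (hGmem g).mpr hgB, Subtype.ext hgmap⟩
  · intro x hx y hy
    obtain ⟨⟨αx, hαx, hdx⟩, hallx⟩ := hx
    obtain ⟨⟨αy, hαy, hdy⟩, hally⟩ := hy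
    have hxadj : (kneser Ω k).Adj αx x := SimpleGraph.dist_eq_one_iff_adj.mp hdx
    have hyadj : (kneser Ω k).Adj αy y := SimpleGraph.dist_eq_one_iff_adj.mp hdy
    have hxC : x ∉ C := by
      intro hcon
      have h0 := hallx x hcon
      rw [SimpleGraph.dist_self] at h0
      omega
    have hyC : y ∉ C := by
      intro hcon
      have h0 := hally y hcon
      rw [SimpleGraph.dist_self] at h0
      omega
    obtain ⟨v, hv1, hveq⟩ :=
      neighbour_type b hcard B hBcard hBdisj hBcover αx.1 x.1 αx.2 x.2 hxadj.2
    obtain ⟨w, hw1, hweq⟩ :=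
      neighbour_type b hcard B hBcard hBdisj hBcover αy.1 y.1 αy.2 y.2 hyadj.2
    rw [(hCmem αx).mp hαx] at hveq
    rw [(hCmem αy).mp hαy] at hweq
    have hXY := multiset_unique ha hb hab M hM hv1 hw1 hveq hweq
      (fun hcon => hxC ((hCmem x).mpr hcon)) (fun hcon => hyC ((hCmem y).mpr hcon))
    obtain ⟨g, hgB, hgmap⟩ := exists_perm_of_type_eq b B hBcard hBdisj hBcover x.1 y.1 hXY
    exact ⟨g, (hGmem g).mpr hgB, Subtype.ext hgmap⟩
end

section
/- Let C be a code in K(n,k) with 2 ≤ k ≤ (n−1)/2, and suppose Aut(C) acts transitively on Ω. Then for every pair of (not necessarily distinct) elements u, v ∈ Ω there exists a codeword β ∈ C with u, v ∈ Ω \ β. -/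
open Finset

section aux
variable {Ω : Type*} [DecidableEq Ω] {k : ℕ}

lemma permV_mem (g : Equiv.Perm Ω) (a : KVert Ω k) (x : Ω) :
    x ∈ (permV g a).1 ↔ g.symm x ∈ a.1 := by
  simp [permV, Finset.mem_map_equiv]

lemma permV_one (a : KVert Ω k) : permV (1 : Equiv.Perm Ω) a = a := by
  apply Subtype.ext
  ext x
  simp [permV, Finset.mem_map_equiv]
  exact Iff.rfl

lemma permV_mul (g h : Equiv.Perm Ω) (a : KVert Ω k) :
    permV (g * h) a = permV g (permV h a) := by
  apply Subtype.ext
  simp only [permV, Finset.map_map]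
  congr 1

lemma mem_autC_apply {C : Set (KVert Ω k)} {g : Equiv.Perm Ω} (hg : g ∈ autC C)
    {β : KVert Ω k} (hβ : β ∈ C) : permV g β ∈ C := by
  have : (permV g) '' C = C := hg
  exact this ▸ Set.mem_image_of_mem _ hβ

lemma one_mem_autC (C : Set (KVert Ω k)) : (1 : Equiv.Perm Ω) ∈ autC C := by
  have : permV (1 : Equiv.Perm Ω) = (id : KVert Ω k → KVert Ω k) := funext permV_one
  show (permV (1 : Equiv.Perm Ω)) '' C = C
  rw [this, Set.image_id]

lemma mul_mem_autC {C : Set (KVert Ω k)} {g h : Equiv.Perm Ω}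
    (hg : g ∈ autC C) (hh : h ∈ autC C) : g * h ∈ autC C := by
  have hcomp : permV (g * h) = (permV g) ∘ (permV h : KVert Ω k → KVert Ω k) :=
    funext (permV_mul g h)
  show (permV (g * h)) '' C = C
  rw [hcomp, Set.image_comp]
  rw [(hh : _ '' C = C), (hg : _ '' C = C)]

lemma inv_mem_autC {C : Set (KVert Ω k)} {g : Equiv.Perm Ω}
    (hg : g ∈ autC C) : g⁻¹ ∈ autC C := by
  show (permV g⁻¹) '' C = C
  conv_lhs => rw [← (hg : _ '' C = C)]
  rw [← Set.image_comp]
  have : (permV g⁻¹) ∘ (permV g : KVert Ω k → KVert Ω k) = id := by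
    funext a
    show permV g⁻¹ (permV g a) = a
    rw [← permV_mul, inv_mul_cancel, permV_one]
  rw [this, Set.image_id]
end aux

/-- if `Aut(C)` is transitive on `Ω`, every pair of points of `Ω`
lies in the complement of some codeword. -/
theorem stmt12 {Ω : Type*} [Fintype Ω] [DecidableEq Ω] {n k : ℕ}
    (hcard : Fintype.card Ω = n) (hk : 2 ≤ k) (hkn : 2 * k + 1 ≤ n)
    (C : Set (KVert Ω k)) (hC : C.Nontrivial)
    (htrans : ∀ x y : Ω, ∃ g ∈ autC C, g x = y) :
    ∀ u v : Ω, ∃ β ∈ C, u ∉ β.1 ∧ v ∉ β.1 := by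

  classical
  obtain ⟨α, hα, -, -, -⟩ := hC
  have key : ∀ u v : Ω, u ≠ v → ∃ β ∈ C, u ∉ β.1 ∧ v ∉ β.1 := by
    intro u v huv
    by_contra hcon
    push_neg at hcon
    set K : Finset Ω := α.1ᶜ with hK
    have hKcard : K.card = n - k := by
      rw [hK, Finset.card_compl, α.2, hcard]
    set G : Finset (Equiv.Perm Ω) := Finset.univ.filter (· ∈ autC C) with hG
    have hGmem : ∀ g : Equiv.Perm Ω, g ∈ G ↔ g ∈ autC C := by
      intro g; simp [hG]
    have hGpos : 0 < G.card := Finset.card_pos.2 ⟨1, (hGmem 1).2 (one_mem_autC C)⟩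
    have hnotboth : ∀ g ∈ G, ¬ (g.symm u ∈ K ∧ g.symm v ∈ K) := by
      rintro g hg ⟨h1, h2⟩
      have hβ : permV g α ∈ C := mem_autC_apply ((hGmem g).1 hg) hα
      have hu : u ∉ (permV g α).1 := by
        rw [permV_mem]; simpa [hK] using h1
      have hv : v ∉ (permV g α).1 := by
        rw [permV_mem]; simpa [hK] using h2
      exact hv (hcon _ hβ hu)
    set c : Ω → Ω → ℕ := fun w x => (G.filter (fun g => g w = x)).card with hc
    have hcconst : ∀ w x : Ω, c w x * n = G.card := by
      intro w x
      have hswap : ∀ x₁ x₂ : Ω, c w x₁ = c w x₂ := by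
        intro x₁ x₂
        obtain ⟨h, hh, hhx⟩ := htrans x₁ x₂
        refine Finset.card_bij' (fun g _ => h * g) (fun g _ => h⁻¹ * g) ?_ ?_ ?_ ?_
        · intro g hg
          simp only [Finset.mem_filter, Finset.mem_univ, true_and] at hg ⊢
          rw [hGmem] at hg ⊢
          refine ⟨mul_mem_autC hh hg.1, ?_⟩
          simp [Equiv.Perm.mul_apply, hg.2, hhx]
        · intro g hg
          simp only [Finset.mem_filter, Finset.mem_univ, true_and] at hg ⊢
          rw [hGmem] at hg ⊢
          refine ⟨mul_mem_autC (inv_mem_autC hh) hg.1, ?_⟩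
          have : h⁻¹ x₂ = x₁ := by rw [← hhx]; simp
          simp [Equiv.Perm.mul_apply, hg.2, this]
        · intro g _; simp [mul_assoc]
        · intro g _; simp [mul_assoc]
      have hsum : ∑ x' : Ω, c w x' = G.card :=
        (Finset.card_eq_sum_card_fiberwise (fun g _ => Finset.mem_univ (g w))).symm
      calc c w x * n = ∑ _x' : Ω, c w x := by
            rw [Finset.sum_const, Finset.card_univ, hcard, smul_eq_mul, mul_comm]
        _ = ∑ x' : Ω, c w x' := Finset.sum_congr rfl (fun x' _ => hswap x x')
        _ = G.card := hsum
    have hfiltu : ∀ (g : Equiv.Perm Ω) (x : Ω), K.filter (fun w => g w = x)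
        = if g.symm x ∈ K then {g.symm x} else ∅ := by
      intro g x
      split_ifs with hx
      · ext w
        simp only [Finset.mem_filter, Finset.mem_singleton]
        constructor
        · rintro ⟨-, rfl⟩; simp
        · rintro rfl; exact ⟨hx, by simp⟩
      · ext w
        simp only [Finset.mem_filter, Finset.notMem_empty, iff_false]
        rintro ⟨hw, rfl⟩
        exact hx (by simpa using hw)
    have hperg : ∀ g ∈ G,
        (K.filter (fun w => g w = u)).card + (K.filter (fun w => g w = v)).card ≤ 1 := by
      intro g hg
      rw [hfiltu g u, hfiltu g v]
      by_cases hu : g.symm u ∈ K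
      · have hv : g.symm v ∉ K := fun hv => hnotboth g hg ⟨hu, hv⟩
        simp [hu, hv]
      · simp [hu]
        split_ifs <;> simp
    have hS1 : ∑ g ∈ G, ((K.filter (fun w => g w = u)).card
        + (K.filter (fun w => g w = v)).card) ≤ G.card := by
      calc ∑ g ∈ G, ((K.filter (fun w => g w = u)).card
            + (K.filter (fun w => g w = v)).card) ≤ ∑ _g ∈ G, 1 :=
            Finset.sum_le_sum hperg
        _ = G.card := by simp
    have hS2 : ∑ g ∈ G, ((K.filter (fun w => g w = u)).card
        + (K.filter (fun w => g w = v)).card) = ∑ w ∈ K, (c w u + c w v) := by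
      simp_rw [hc, Finset.card_filter, ← Finset.sum_add_distrib]
      exact Finset.sum_comm
    have hbig : (n - k) * (2 * G.card) = ∑ w ∈ K, (c w u + c w v) * n := by
      rw [Finset.sum_congr rfl (fun w _ => by
        rw [add_mul, hcconst w u, hcconst w v]), Finset.sum_const, hKcard, smul_eq_mul]
      ring
    have hfinal : (n - k) * (2 * G.card) ≤ n * G.card := by
      rw [hbig]
      calc ∑ w ∈ K, (c w u + c w v) * n = (∑ w ∈ K, (c w u + c w v)) * n :=
            (Finset.sum_mul _ _ _).symm
        _ ≤ G.card * n := by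
            apply Nat.mul_le_mul_right
            rw [← hS2]; exact hS1
        _ = n * G.card := mul_comm _ _
    have h2nk : (n + 1) * G.card ≤ (n - k) * (2 * G.card) := by
      have : n + 1 ≤ 2 * (n - k) := by omega
      calc (n + 1) * G.card ≤ (2 * (n - k)) * G.card := Nat.mul_le_mul_right _ this
        _ = (n - k) * (2 * G.card) := by ring
    have : n + 1 ≤ n := by
      exact Nat.le_of_mul_le_mul_right (le_trans h2nk hfinal) hGpos
    omega
  intro u v
  by_cases huv : u = v
  · subst huv
    have hcard2 : 1 < Fintype.card Ω := by omega
    obtain ⟨v', hv'⟩ := Fintype.exists_ne_of_one_lt_card hcard2 u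
    obtain ⟨β, hβ, h1, h2⟩ := key u v' (Ne.symm hv')
    exact ⟨β, hβ, h1, h1⟩
  · exact key u v huv
end
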